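/- Both families DNREG(√n) and DNREG(log n) contain non-regular languages: there exist context-free grammars G₁ and G₂ generating non-regular languages with dnreg_{G₁}(n) ∈ O(√n) and dnreg_{G₂}(n) ∈ O(log n). -/

import Mathlib

/-- A context-free rule is *regular* (right-linear) if it has the form `A → w` or `A → wB`
for a terminal word `w` and a nonterminal `B`. -/
def IsRegularRule {T N : Type} (r : ContextFreeRule T N) : Prop :=
  (∃ w : List T, r.output = w.map Symbol.terminal) ∨
  (∃ w : List T, ∃ B : N, r.output = w.map Symbol.terminal ++ [Symbol.nonterminal B])

/-- `DerivesN g u v k` : the grammar `g` derives `v` from `u` by a derivation using exactly `k`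
applications of non-regular rules. -/
inductive DerivesN (g : ContextFreeGrammar T) :
    List (Symbol T g.NT) → List (Symbol T g.NT) → ℕ → Prop
  | refl (u : List (Symbol T g.NT)) : DerivesN g u u 0
  | regStep {u v w : List (Symbol T g.NT)} {k : ℕ} (r : ContextFreeRule T g.NT)
      (hr : r ∈ g.rules) (hreg : IsRegularRule r) (huv : r.Rewrites u v)
      (hvw : DerivesN g v w k) : DerivesN g u w k
  | nonregStep {u v w : List (Symbol T g.NT)} {k : ℕ} (r : ContextFreeRule T g.NT)
      (hr : r ∈ g.rules) (hreg : ¬ IsRegularRule r) (huv : r.Rewrites u v)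
      (hvw : DerivesN g v w k) : DerivesN g u w (k + 1)

/-- The degree of non-regularity of a terminal word: the minimal number of applications of
non-regular rules over all derivations of the word (`0` if there is no derivation, since in `ℕ`
the infimum of the empty set is `0`). -/
noncomputable def dnregWord (g : ContextFreeGrammar T) (w : List T) : ℕ :=
  sInf {k | DerivesN g [Symbol.nonterminal g.initial] (w.map Symbol.terminal) k}

/-- The degree of non-regularity of the grammar: the maximum of `dnregWord` over words of
length `n`. -/
noncomputable def dnregFun (g : ContextFreeGrammar T) (n : ℕ) : ℕ :=
  sSup {m | ∃ w : List T, w.length = n ∧ dnregWord g w = m}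

/-- `f ∈ O(h)` for `ℕ`-valued functions. -/
def InO (f h : ℕ → ℕ) : Prop := ∃ c : ℕ, ∀ n, f n ≤ c * h n + c

/-- `f ∈ Ω(n)`: there is a rational constant `1/c > 0` with `f n ≥ n/c` for infinitely many `n`. -/
def InOmegaLinear (f : ℕ → ℕ) : Prop := ∃ c : ℕ, 0 < c ∧ ∀ m : ℕ, ∃ n ≥ m, n ≤ c * f n

/-- The class `DNREG(h)` of languages generated by some context-free grammar whose degree of
non-regularity is in `O(h)`. -/
def DNREG (T : Type) (h : ℕ → ℕ) : Set (Language T) :=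
  {L | ∃ g : ContextFreeGrammar T, g.language = L ∧ InO (dnregFun g) h}

namespace DnregAux

universe u
variable {T : Type}

/-! ### Generic lemmas about `DerivesN` -/

lemma DerivesN.trans {g : ContextFreeGrammar T} {u v w : List (Symbol T g.NT)} {k l : ℕ}
    (h₁ : DerivesN g u v k) (h₂ : DerivesN g v w l) : DerivesN g u w (k + l) := by
  induction h₁ with
  | refl => simpa using h₂
  | regStep r hr hreg huv _ ih => exact DerivesN.regStep r hr hreg huv (ih h₂)
  | nonregStep r hr hreg huv _ ih =>
    have := DerivesN.nonregStep r hr hreg huv (ih h₂)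
    simpa [Nat.add_right_comm] using this

lemma DerivesN.append_left {g : ContextFreeGrammar T} {u v : List (Symbol T g.NT)} {k : ℕ}
    (h : DerivesN g u v k) (p : List (Symbol T g.NT)) :
    DerivesN g (p ++ u) (p ++ v) k := by
  induction h with
  | refl => exact DerivesN.refl _
  | regStep r hr hreg huv _ ih => exact DerivesN.regStep r hr hreg (huv.append_left p) ih
  | nonregStep r hr hreg huv _ ih => exact DerivesN.nonregStep r hr hreg (huv.append_left p) ih

lemma DerivesN.append_right {g : ContextFreeGrammar T} {u v : List (Symbol T g.NT)} {k : ℕ}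
    (h : DerivesN g u v k) (p : List (Symbol T g.NT)) :
    DerivesN g (u ++ p) (v ++ p) k := by
  induction h with
  | refl => exact DerivesN.refl _
  | regStep r hr hreg huv _ ih => exact DerivesN.regStep r hr hreg (huv.append_right p) ih
  | nonregStep r hr hreg huv _ ih => exact DerivesN.nonregStep r hr hreg (huv.append_right p) ih

lemma DerivesN.concat {g : ContextFreeGrammar T} {u v u' v' : List (Symbol T g.NT)} {k l : ℕ}
    (h₁ : DerivesN g u v k) (h₂ : DerivesN g u' v' l) :
    DerivesN g (u ++ u') (v ++ v') (k + l) :=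
  DerivesN.trans (DerivesN.append_right h₁ u') (DerivesN.append_left h₂ v)

lemma derives_of_derivesN {g : ContextFreeGrammar T} {u v : List (Symbol T g.NT)} {k : ℕ}
    (h : DerivesN g u v k) : g.Derives u v := by
  induction h with
  | refl => rfl
  | regStep r hr _ huv _ ih => exact (Relation.ReflTransGen.single ⟨r, hr, huv⟩).trans ih
  | nonregStep r hr _ huv _ ih => exact (Relation.ReflTransGen.single ⟨r, hr, huv⟩).trans ih

/-- A single regular production step from a lone nonterminal, continued. -/
lemma DerivesN.stepReg {g : ContextFreeGrammar T} {r : ContextFreeRule T g.NT}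
    (hr : r ∈ g.rules) (hreg : IsRegularRule r) {w : List (Symbol T g.NT)} {k : ℕ}
    (h : DerivesN g r.output w k) :
    DerivesN g [Symbol.nonterminal r.input] w k :=
  DerivesN.regStep r hr hreg ContextFreeRule.Rewrites.input_output h

lemma DerivesN.stepNonreg {g : ContextFreeGrammar T} {r : ContextFreeRule T g.NT}
    (hr : r ∈ g.rules) (hreg : ¬ IsRegularRule r) {w : List (Symbol T g.NT)} {k : ℕ}
    (h : DerivesN g r.output w k) :
    DerivesN g [Symbol.nonterminal r.input] w (k + 1) :=
  DerivesN.nonregStep r hr hreg ContextFreeRule.Rewrites.input_output h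

/-! ### A soundness framework for context-free grammars -/

/-- `SForm f α w` : the terminal word `w` matches the sentential form `α` where every
nonterminal `A` is allowed to produce any word in `f A`. -/
def SForm {N : Type} (f : N → Language T) : List (Symbol T N) → List T → Prop
  | [], w => w = []
  | Symbol.terminal a :: s, w => ∃ w', w = a :: w' ∧ SForm f s w'
  | Symbol.nonterminal A :: s, w => ∃ w₁ w₂, w₁ ∈ f A ∧ SForm f s w₂ ∧ w = w₁ ++ w₂

@[simp] lemma sform_nil {N : Type} (f : N → Language T) (w : List T) :
    SForm f [] w ↔ w = [] := Iff.rfl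

@[simp] lemma sform_terminal_cons {N : Type} (f : N → Language T) (a : T)
    (s : List (Symbol T N)) (w : List T) :
    SForm f (Symbol.terminal a :: s) w ↔ ∃ w', w = a :: w' ∧ SForm f s w' := Iff.rfl

@[simp] lemma sform_nonterminal_cons {N : Type} (f : N → Language T) (A : N)
    (s : List (Symbol T N)) (w : List T) :
    SForm f (Symbol.nonterminal A :: s) w ↔
      ∃ w₁ w₂, w₁ ∈ f A ∧ SForm f s w₂ ∧ w = w₁ ++ w₂ := Iff.rfl

lemma sform_append {N : Type} {f : N → Language T} :
    ∀ {α β : List (Symbol T N)} {w : List T},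
      SForm f (α ++ β) w ↔ ∃ w₁ w₂, SForm f α w₁ ∧ SForm f β w₂ ∧ w = w₁ ++ w₂ := by
  intro α
  induction α with
  | nil =>
    intro β w
    constructor
    · intro h; exact ⟨[], w, rfl, by simpa using h, rfl⟩
    · rintro ⟨w₁, w₂, h₁, h₂, rfl⟩; rw [show w₁ = [] from h₁]; simpa using h₂
  | cons x s ih =>
    intro β w
    cases x with
    | terminal a =>
      simp only [List.cons_append, sform_terminal_cons]
      constructor
      · rintro ⟨w', rfl, h⟩
        rcases ih.mp h with ⟨w₁, w₂, h₁, h₂, rfl⟩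
        exact ⟨a :: w₁, w₂, ⟨w₁, rfl, h₁⟩, h₂, rfl⟩
      · rintro ⟨w₁, w₂, ⟨w', rfl, h₁⟩, h₂, rfl⟩
        exact ⟨w' ++ w₂, rfl, ih.mpr ⟨w', w₂, h₁, h₂, rfl⟩⟩
    | nonterminal A =>
      simp only [List.cons_append, sform_nonterminal_cons]
      constructor
      · rintro ⟨w₁, w₂, hA, h, rfl⟩
        rcases ih.mp h with ⟨x₁, x₂, h₁, h₂, rfl⟩
        exact ⟨w₁ ++ x₁, x₂, ⟨w₁, x₁, hA, h₁, rfl⟩, h₂, by simp⟩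
      · rintro ⟨w₁, w₂, ⟨x₁, x₂, hA, h₁, rfl⟩, h₂, rfl⟩
        exact ⟨x₁, x₂ ++ w₂, hA, ih.mpr ⟨x₂, w₂, h₁, h₂, rfl⟩, by simp⟩

lemma sform_self {N : Type} {f : N → Language T} :
    ∀ w : List T, SForm f (w.map Symbol.terminal) w := by
  intro w
  induction w with
  | nil => rfl
  | cons a w ih => exact ⟨w, rfl, ih⟩

lemma sform_of_derives {g : ContextFreeGrammar T} {f : g.NT → Language T}
    (hcl : ∀ r ∈ g.rules, ∀ w, SForm f r.output w → w ∈ f r.input) :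
    ∀ {u v : List (Symbol T g.NT)}, g.Derives u v →
      ∀ {w : List T}, SForm f v w → SForm f u w := by
  intro u v h
  induction h with
  | refl => exact fun hw => hw
  | tail _ step ih =>
    intro w hw
    apply ih
    rcases step with ⟨r, hr, hrw⟩
    rcases ContextFreeRule.Rewrites.exists_parts hrw with ⟨p, q, rfl, rfl⟩
    rcases sform_append.mp hw with ⟨w₁, w₂, h₁, h₂, rfl⟩
    rcases sform_append.mp h₁ with ⟨x₁, x₂, hx₁, hx₂, rfl⟩
    refine sform_append.mpr ⟨x₁ ++ x₂, w₂, ?_, h₂, rfl⟩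
    refine sform_append.mpr ⟨x₁, x₂, hx₁, ?_, rfl⟩
    exact ⟨x₂, [], hcl r hr x₂ hx₂, rfl, by simp⟩

lemma lang_sound {g : ContextFreeGrammar T} {f : g.NT → Language T}
    (hcl : ∀ r ∈ g.rules, ∀ w, SForm f r.output w → w ∈ f r.input)
    {A : g.NT} {w : List T}
    (h : g.Derives [Symbol.nonterminal A] (w.map Symbol.terminal)) : w ∈ f A := by
  have := sform_of_derives hcl h (sform_self w)
  rcases this with ⟨w₁, w₂, hA, h₂, hw⟩
  rcases h₂ with rfl
  simpa [hw, List.append_nil] using hA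

end DnregAux
namespace DnregAux

/-! ### The alphabet -/

/-- The alphabet: two binary digits and two separators. -/
inductive Al : Type
  | b0 : Al
  | b1 : Al
  | c : Al
  | d : Al
deriving DecidableEq

instance : Fintype Al := ⟨{Al.b0, Al.b1, Al.c, Al.d}, fun x => by cases x <;> simp⟩

/-- Embedding of binary digits. -/
def dg (b : Bool) : Al := if b then Al.b1 else Al.b0

/-- Embedding of binary words. -/
def dm (v : List Bool) : List Al := v.map dg

@[simp] lemma dm_nil : dm [] = [] := rfl
@[simp] lemma dm_cons (b : Bool) (v : List Bool) : dm (b :: v) = dg b :: dm v := rfl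
@[simp] lemma dm_append (u v : List Bool) : dm (u ++ v) = dm u ++ dm v := List.map_append ..
@[simp] lemma dm_length (v : List Bool) : (dm v).length = v.length := List.length_map ..

lemma dg_injective : Function.Injective dg := by
  intro a b h
  cases a <;> cases b <;> simp [dg] at h ⊢

lemma dm_injective : Function.Injective dm :=
  List.map_injective_iff.mpr dg_injective

@[simp] lemma dg_ne_c (b : Bool) : dg b ≠ Al.c := by cases b <;> simp [dg]
@[simp] lemma dg_ne_d (b : Bool) : dg b ≠ Al.d := by cases b <;> simp [dg]

/-- A separator is `c` or `d`. -/
def IsSep (x : Al) : Prop := x = Al.c ∨ x = Al.d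

lemma isSep_c : IsSep Al.c := Or.inl rfl
lemma isSep_d : IsSep Al.d := Or.inr rfl

lemma dg_ne_sep {b : Bool} {x : Al} (hx : IsSep x) : dg b ≠ x := by
  rcases hx with rfl | rfl
  · exact dg_ne_c b
  · exact dg_ne_d b

/-- Unique parsing at the first separator. -/
lemma sep_split : ∀ {a a' : List Bool} {x x' : Al} {r r' : List Al}, IsSep x → IsSep x' →
    dm a ++ x :: r = dm a' ++ x' :: r' → a = a' ∧ x = x' ∧ r = r' := by
  intro a
  induction a with
  | nil =>
    intro a' x x' r r' hx hx' h
    cases a' with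
    | nil => simpa using h
    | cons b a' =>
      exfalso
      simp only [dm_nil, List.nil_append, dm_cons, List.cons_append, List.cons.injEq] at h
      exact dg_ne_sep hx h.1.symm
  | cons b a ih =>
    intro a' x x' r r' hx hx' h
    cases a' with
    | nil =>
      exfalso
      simp only [dm_cons, List.cons_append, dm_nil, List.nil_append, List.cons.injEq] at h
      exact dg_ne_sep hx' h.1
    | cons b' a' =>
      simp only [dm_cons, List.cons_append, List.cons.injEq] at h
      obtain ⟨hb, h⟩ := h
      obtain ⟨h1, h2, h3⟩ := ih hx hx' h
      exact ⟨by rw [dg_injective hb, h1], h2, h3⟩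

/-! ### Encodings of block sequences -/

/-- `x c y d` blocks. -/
def cdW (P : List (List Bool × List Bool)) : List Al :=
  P.flatMap fun p => dm p.1 ++ [Al.c] ++ dm p.2 ++ [Al.d]

/-- `x d y c` blocks. -/
def dcW (M : List (List Bool × List Bool)) : List Al :=
  M.flatMap fun p => dm p.1 ++ [Al.d] ++ dm p.2 ++ [Al.c]

@[simp] lemma cdW_nil : cdW [] = [] := rfl
@[simp] lemma dcW_nil : dcW [] = [] := rfl

lemma cdW_cons (p : List Bool × List Bool) (P : List (List Bool × List Bool)) :
    cdW (p :: P) = dm p.1 ++ [Al.c] ++ dm p.2 ++ [Al.d] ++ cdW P := by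
  simp [cdW, List.flatMap_cons]

lemma dcW_cons (p : List Bool × List Bool) (M : List (List Bool × List Bool)) :
    dcW (p :: M) = dm p.1 ++ [Al.d] ++ dm p.2 ++ [Al.c] ++ dcW M := by
  simp [dcW, List.flatMap_cons]

@[simp] lemma cdW_append (P Q : List (List Bool × List Bool)) :
    cdW (P ++ Q) = cdW P ++ cdW Q := by simp [cdW]

@[simp] lemma dcW_append (P Q : List (List Bool × List Bool)) :
    dcW (P ++ Q) = dcW P ++ dcW Q := by simp [dcW]

lemma cdW_length_ge (P : List (List Bool × List Bool)) : 2 * P.length ≤ (cdW P).length := by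
  induction P with
  | nil => simp
  | cons p P ih =>
    rw [cdW_cons]
    simp only [List.length_append, List.length_cons, List.length_nil, List.length_singleton,
      List.length, dm_length]
    omega

lemma cdW_cons' (x y : List Bool) (P : List (List Bool × List Bool)) :
    cdW ((x, y) :: P) = dm x ++ Al.c :: (dm y ++ Al.d :: cdW P) := by
  rw [cdW_cons]; simp

lemma cdW_inj : ∀ {P P' : List (List Bool × List Bool)}, cdW P = cdW P' → P = P' := by
  intro P
  induction P with
  | nil =>
    intro P' h
    cases P' with
    | nil => rfl
    | cons p P' =>
      exfalso
      rcases p with ⟨x, y⟩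
      rw [cdW_nil, cdW_cons'] at h
      have : (([] : List Al)).length = (dm x ++ Al.c :: (dm y ++ Al.d :: cdW P')).length := by
        rw [h]
      simp at this
  | cons p P ih =>
    intro P' h
    cases P' with
    | nil =>
      exfalso
      rcases p with ⟨x, y⟩
      rw [cdW_nil, cdW_cons'] at h
      have : ((dm x ++ Al.c :: (dm y ++ Al.d :: cdW P))).length = ([] : List Al).length := by
        rw [h]
      simp at this
    | cons p' P' =>
      rcases p with ⟨x, y⟩
      rcases p' with ⟨x', y'⟩
      rw [cdW_cons', cdW_cons'] at h
      obtain ⟨hx, -, h⟩ := sep_split isSep_c isSep_c h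
      obtain ⟨hy, -, h⟩ := sep_split isSep_d isSep_d h
      rw [hx, hy, ih h]

end DnregAux
namespace DnregAux

/-! ### The binary counter -/

/-- Most-significant-bit-first binary representation. -/
def msb (n : ℕ) : List Bool := (Nat.bits n).reverse

/-- `KRel α β` : `α` (LSB first) and `β` (MSB first) represent consecutive values. -/
def KRel (α β : List Bool) : Prop :=
  (∃ k z, α = List.replicate k true ++ false :: z ∧
      β = z.reverse ++ true :: List.replicate k false) ∨
  (∃ m, α = List.replicate m true ∧ β = true :: List.replicate m false)

lemma bits_succ_structure : ∀ s : ℕ, 1 ≤ s →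
    (∃ k z, Nat.bits s = List.replicate k true ++ false :: z ∧
        Nat.bits (s + 1) = List.replicate k false ++ true :: z) ∨
    (∃ m, Nat.bits s = List.replicate m true ∧
        Nat.bits (s + 1) = List.replicate m false ++ [true]) := by
  intro s
  induction s using Nat.strong_induction_on with
  | _ s ih =>
    intro hs
    rcases Nat.even_or_odd s with ⟨u, hu⟩ | ⟨u, hu⟩
    · -- s = 2u, u ≥ 1
      have hu1 : u ≠ 0 := by omega
      have h1 : Nat.bits s = false :: Nat.bits u := by
        rw [hu, show u + u = 2 * u by ring, Nat.bit0_bits u hu1]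
      have h2 : Nat.bits (s + 1) = true :: Nat.bits u := by
        rw [hu, show u + u + 1 = 2 * u + 1 by ring, Nat.bit1_bits u]
      exact Or.inl ⟨0, Nat.bits u, by simpa using h1, by simpa using h2⟩
    · -- s = 2u + 1
      rcases Nat.eq_zero_or_pos u with rfl | hu1
      · -- s = 1
        right
        refine ⟨1, ?_, ?_⟩
        · rw [hu]; simp [Nat.one_bits]
        · rw [hu]
          norm_num
          rw [show (2 : ℕ) = 2 * 1 by norm_num, Nat.bit0_bits 1 one_ne_zero]
          simp [Nat.one_bits]
      · have h1 : Nat.bits s = true :: Nat.bits u := by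
          rw [hu, Nat.bit1_bits u]
        have h2 : Nat.bits (s + 1) = false :: Nat.bits (u + 1) := by
          rw [hu, show 2 * u + 1 + 1 = 2 * (u + 1) by ring,
            Nat.bit0_bits (u + 1) (Nat.succ_ne_zero u)]
        rcases ih u (by omega) hu1 with ⟨k, z, hb1, hb2⟩ | ⟨m, hb1, hb2⟩
        · left
          refine ⟨k + 1, z, ?_, ?_⟩
          · rw [h1, hb1, List.replicate_succ]; simp
          · rw [h2, hb2, List.replicate_succ]; simp
        · right
          refine ⟨m + 1, ?_, ?_⟩
          · rw [h1, hb1, List.replicate_succ]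
          · rw [h2, hb2, List.replicate_succ]; simp

lemma succ_krel {s : ℕ} (hs : 1 ≤ s) : KRel (Nat.bits s) (msb (s + 1)) := by
  rcases bits_succ_structure s hs with ⟨k, z, h1, h2⟩ | ⟨m, h1, h2⟩
  · left
    refine ⟨k, z, h1, ?_⟩
    rw [msb, h2]
    simp [List.reverse_replicate]
  · right
    refine ⟨m, h1, ?_⟩
    rw [msb, h2]
    simp [List.reverse_replicate]

/-- Leading-ones decompositions are unique. -/
lemma lead_unique : ∀ {k k' : ℕ} {z z' : List Bool},
    List.replicate k true ++ false :: z = List.replicate k' true ++ false :: z' →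
    k = k' ∧ z = z' := by
  intro k
  induction k with
  | zero =>
    intro k' z z' h
    cases k' with
    | zero => simpa using h
    | succ k' => simp [List.replicate_succ] at h
  | succ k ih =>
    intro k' z z' h
    cases k' with
    | zero => simp [List.replicate_succ] at h
    | succ k' =>
      simp only [List.replicate_succ, List.cons_append, List.cons.injEq, true_and] at h
      obtain ⟨h1, h2⟩ := ih h
      exact ⟨by omega, h2⟩

lemma lead_ne_replicate {k m : ℕ} {z : List Bool} :
    List.replicate k true ++ false :: z ≠ List.replicate m true := by
  intro h
  have : false ∈ List.replicate m true := by
    rw [← h]; simp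
  simp [List.mem_replicate] at this

/-- `KRel` is functional in its second argument. -/
lemma krel_unique {α β β' : List Bool} (h : KRel α β) (h' : KRel α β') : β = β' := by
  rcases h with ⟨k, z, h1, h2⟩ | ⟨m, h1, h2⟩ <;> rcases h' with ⟨k', z', h1', h2'⟩ | ⟨m', h1', h2'⟩
  · obtain ⟨rfl, rfl⟩ := lead_unique (h1.symm.trans h1')
    rw [h2, h2']
  · exact absurd (h1.symm.trans h1') lead_ne_replicate
  · exact absurd (h1'.symm.trans h1) lead_ne_replicate
  · have : m = m' := by
      have := congrArg List.length (h1.symm.trans h1')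
      simpa using this
    rw [h2, h2', this]

/-- Binary value of an LSB-first digit list. -/
def bval (l : List Bool) : ℕ := l.foldr (fun b n => Nat.bit b n) 0

lemma bval_bits : ∀ n : ℕ, bval (Nat.bits n) = n := by
  intro n
  induction n using Nat.binaryRec with
  | zero => simp [bval, Nat.zero_bits]
  | bit b u ih =>
    by_cases h : Nat.bit b u = 0
    · rw [h]; simp [bval, Nat.zero_bits]
    · rw [Nat.bits_append_bit u b (by
        intro hu
        rcases b with _ | _
        · exfalso; apply h; rw [hu]; rfl
        · rfl)]
      show Nat.bit b (bval (Nat.bits u)) = Nat.bit b u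
      rw [ih]

lemma bits_injective : Function.Injective Nat.bits := by
  intro a b h
  have := congrArg bval h
  rwa [bval_bits, bval_bits] at this

lemma msb_injective : Function.Injective msb := by
  intro a b h
  exact bits_injective (by simpa [msb] using congrArg List.reverse h)

@[simp] lemma msb_reverse (n : ℕ) : (msb n).reverse = Nat.bits n := by simp [msb]

lemma bits_two : Nat.bits 2 = [false, true] := by
  rw [show (2 : ℕ) = 2 * 1 by norm_num, Nat.bit0_bits 1 one_ne_zero, Nat.one_bits]

lemma msb_two : msb 2 = [true, false] := by rw [msb, bits_two]; rfl

lemma bits_len_size (n : ℕ) : (Nat.bits n).length = Nat.size n := Nat.size_eq_bits_len n |>.symm ▸ rfl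

/-! ### The canonical chain -/

/-- `chain s n` : `n` consecutive `(lsb t, msb (t+1))` pairs starting at `t = s`. -/
def chain : ℕ → ℕ → List (List Bool × List Bool)
  | _, 0 => []
  | s, n + 1 => (Nat.bits s, msb (s + 1)) :: chain (s + 1) n

@[simp] lemma chain_zero (s : ℕ) : chain s 0 = [] := rfl
lemma chain_succ (s n : ℕ) : chain s (n + 1) = (Nat.bits s, msb (s + 1)) :: chain (s + 1) n := rfl

@[simp] lemma chain_length : ∀ n s : ℕ, (chain s n).length = n := by
  intro n
  induction n with
  | zero => intro s; rfl
  | succ n ih => intro s; rw [chain_succ]; simp [ih]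

lemma chain_snoc : ∀ n s : ℕ, chain s (n + 1) = chain s n ++ [(Nat.bits (s + n), msb (s + n + 1))] := by
  intro n
  induction n with
  | zero => intro s; simp [chain_succ]
  | succ n ih =>
    intro s
    rw [chain_succ, ih (s + 1), chain_succ,
      show s + 1 + n = s + (n + 1) by omega, show s + (n + 1) + 1 = s + 1 + n + 1 by omega]
    simp

lemma chain_mem : ∀ {n s : ℕ} {p : List Bool × List Bool}, p ∈ chain s n →
    ∃ u, s ≤ u ∧ p = (Nat.bits u, msb (u + 1)) := by
  intro n
  induction n with
  | zero => intro s p h; simp at h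
  | succ n ih =>
    intro s p h
    rw [chain_succ] at h
    rcases List.mem_cons.mp h with rfl | h
    · exact ⟨s, le_refl s, rfl⟩
    · obtain ⟨u, hu, hp⟩ := ih h
      exact ⟨u, by omega, hp⟩

/-- First deviation from the canonical chain. -/
lemma first_bad : ∀ (P : List (List Bool × List Bool)) (s : ℕ), P ≠ chain s P.length →
    ∃ j, ∃ h : j < P.length, P.take j = chain s j ∧ P[j] ≠ (Nat.bits (s + j), msb (s + j + 1)) := by
  intro P
  induction P with
  | nil => intro s h; simp at h
  | cons p P ih =>
    intro s h
    by_cases hp : p = (Nat.bits s, msb (s + 1))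
    · have hP : P ≠ chain (s + 1) P.length := by
        intro hc
        apply h
        rw [List.length_cons, chain_succ, hp]
        exact congrArg (List.cons _) hc
      obtain ⟨j, hj, h1, h2⟩ := ih (s + 1) hP
      refine ⟨j + 1, by simpa using hj, ?_, ?_⟩
      · rw [List.take_succ_cons, h1, hp, chain_succ]
      · simpa [show s + 1 + j = s + (j + 1) by omega, show s + 1 + j + 1 = s + (j + 1) + 1 by omega]
          using h2
    · exact ⟨0, by simp, by simp, by simpa using hp⟩

end DnregAux
namespace DnregAux

/-! ### The target language shape -/

/-- Words of the correct format that are **not** valid counter computations. -/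
def BadShape : Language Al :=
  {w | ∃ v P, w = [dg true, Al.c] ++ dm v ++ Al.d :: cdW P ∧
      (v ≠ msb 2 ∨ P ≠ chain 2 P.length)}

/-- The mirrored chain `(msb s, lsb s)` pairs. -/
def mchain : ℕ → ℕ → List (List Bool × List Bool)
  | _, 0 => []
  | s, n + 1 => (msb s, Nat.bits s) :: mchain (s + 1) n

@[simp] lemma mchain_zero (s : ℕ) : mchain s 0 = [] := rfl
lemma mchain_succ (s n : ℕ) :
    mchain s (n + 1) = (msb s, Nat.bits s) :: mchain (s + 1) n := rfl

lemma regroup : ∀ (n s : ℕ),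
    dm (msb s) ++ Al.d :: cdW (chain s n) =
      dcW (mchain s n) ++ dm (msb (s + n)) ++ [Al.d] := by
  intro n
  induction n with
  | zero => intro s; simp
  | succ n ih =>
    intro s
    have h := ih (s + 1)
    rw [show s + 1 + n = s + (n + 1) by omega] at h
    rw [chain_succ, cdW_cons, mchain_succ, dcW_cons]
    simp only [List.append_assoc, List.singleton_append, List.cons_append, List.nil_append] at h ⊢
    rw [← h]

/-- Head block of a `dc`-sequence followed by a final block. -/
def hdv : List (List Bool × List Bool) → List Bool → List Bool
  | [], a => a
  | p :: _, _ => p.1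

@[simp] lemma hdv_nil (a : List Bool) : hdv [] a = a := rfl
@[simp] lemma hdv_cons (p : List Bool × List Bool) (M : List (List Bool × List Bool))
    (a : List Bool) : hdv (p :: M) a = p.1 := rfl

/-- Reassociation of `dc`-blocks plus a tail into `cd`-blocks. -/
def reassoc : List (List Bool × List Bool) → List Bool → List (List Bool × List Bool) →
    List (List Bool × List Bool)
  | [], _, L => L
  | p :: M, a, L => (p.2, hdv M a) :: reassoc M a L

@[simp] lemma reassoc_nil (a : List Bool) (L : List (List Bool × List Bool)) :
    reassoc [] a L = L := rfl
@[simp] lemma reassoc_cons (p : List Bool × List Bool) (M : List (List Bool × List Bool))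
    (a : List Bool) (L : List (List Bool × List Bool)) :
    reassoc (p :: M) a L = (p.2, hdv M a) :: reassoc M a L := rfl

lemma reassoc_eq : ∀ (M : List (List Bool × List Bool)) (a : List Bool)
    (L : List (List Bool × List Bool)),
    dcW M ++ dm a ++ Al.d :: cdW L = dm (hdv M a) ++ Al.d :: cdW (reassoc M a L) := by
  intro M
  induction M with
  | nil => intro a L; simp
  | cons p M ih =>
    intro a L
    rcases p with ⟨x, y⟩
    have h := ih a L
    rw [dcW_cons, reassoc_cons, cdW_cons']
    simp only [List.append_assoc, List.singleton_append, List.cons_append, List.nil_append, hdv_cons] at h ⊢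
    rw [← h]

lemma reassoc_bad : ∀ (M : List (List Bool × List Bool)) {σ τ : List Bool} (a : List Bool)
    (L : List (List Bool × List Bool)) (s n : ℕ),
    τ ≠ σ.reverse → hdv (M ++ [(σ, τ)]) a = msb s →
    reassoc (M ++ [(σ, τ)]) a L = chain s n → False := by
  intro M
  induction M with
  | nil =>
    intro σ τ a L s n hτ h1 h2
    simp only [List.nil_append, hdv_cons] at h1
    simp only [List.nil_append, reassoc_cons, hdv_nil, reassoc_nil] at h2
    cases n with
    | zero => simp [chain_zero] at h2
    | succ n =>
      rw [chain_succ, List.cons.injEq, Prod.mk.injEq] at h2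
      apply hτ
      rw [h2.1.1, h1, msb_reverse]
  | cons p M ih =>
    intro σ τ a L s n hτ h1 h2
    simp only [List.cons_append, hdv_cons] at h1
    simp only [List.cons_append, reassoc_cons] at h2
    cases n with
    | zero => simp [chain_zero] at h2
    | succ n =>
      rw [chain_succ, List.cons.injEq, Prod.mk.injEq] at h2
      exact ih a L (s + 1) n hτ h2.1.2 h2.2

/-! ### The valid words -/

/-- The valid counter words (the word `1c 10d 01c 11d …` with `t+2` blocks). -/
def Wt (t : ℕ) : List Al := [dg true, Al.c] ++ dm (msb 2) ++ Al.d :: cdW (chain 2 t)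

lemma Wt_not_bad (t : ℕ) : Wt t ∉ BadShape := by
  rintro ⟨v, P, h, hbad⟩
  rw [Wt] at h
  simp only [List.append_assoc, List.cons_append, List.nil_append, List.cons.injEq,
    true_and] at h
  obtain ⟨hv, -, hP⟩ := sep_split isSep_d isSep_d h
  obtain rfl := hv
  obtain rfl := cdW_inj hP
  rcases hbad with h | h
  · exact h rfl
  · rw [chain_length] at h; exact h rfl

lemma Wt_snoc (t : ℕ) : Wt (t + 1) = Wt t ++ cdW [(Nat.bits (2 + t), msb (2 + t + 1))] := by
  rw [Wt, Wt, chain_snoc t 2, cdW_append]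
  simp

end DnregAux
namespace DnregAux

/-! ### The grammar -/

/-- Nonterminals. -/
inductive Nt : Type
  | S | ga | gb | gd | gf
  | preK | cx0 | preM | pm1 | poK
  | x0 | x1 | y0 | y1 | y2 | z0
  | nk | d5 | d10 | e2 | e6 | d8 | d9
  | nm (s : Al) | e1 (s : Al) | e3 (s : Al) | e5 (s : Al)
deriving DecidableEq

deriving instance DecidableEq for Symbol
deriving instance DecidableEq for ContextFreeRule

/-- Terminal symbol. -/
def t (a : Al) : Symbol Al Nt := Symbol.terminal a
/-- Nonterminal symbol. -/
def n (A : Nt) : Symbol Al Nt := Symbol.nonterminal A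

/-- Rule constructor. -/
def R (A : Nt) (o : List (Symbol Al Nt)) : ContextFreeRule Al Nt := ⟨A, o⟩

/-- The mirror-checking rules, parametrized by the separator. -/
def mirrorRules (s : Al) : List (ContextFreeRule Al Nt) :=
  [ R (.nm s) [t (dg false), n (.nm s), t (dg false)],
    R (.nm s) [t (dg true), n (.nm s), t (dg true)],
    R (.nm s) [t (dg false), n (.e1 s)],
    R (.nm s) [t (dg true), n (.e3 s)],
    R (.nm s) [t s, n .d9],
    R (.nm s) [t (dg false), n (.e5 s)],
    R (.nm s) [t (dg true), n (.e5 s)],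
    R (.e1 s) [t (dg false), n (.e1 s)],
    R (.e1 s) [t (dg true), n (.e1 s)],
    R (.e1 s) [t s, n .e6],
    R (.e3 s) [t (dg false), n (.e3 s)],
    R (.e3 s) [t (dg true), n (.e3 s)],
    R (.e3 s) [t s, n .e2],
    R (.e5 s) [t s],
    R (.e5 s) [t (dg false), n (.e5 s)],
    R (.e5 s) [t (dg true), n (.e5 s)] ]

/-- All rules of the grammar. -/
def rulesList : List (ContextFreeRule Al Nt) :=
  [ R .S [n .preK, n .nk, n .poK],
    R .S [n .preM, n (.nm .d), n .cx0],
    R .S [t (dg true), n .ga],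
    R .ga [t .c, n .gb],
    R .gb [t .d, n .z0],
    R .gb [t (dg false), n .x0],
    R .gb [t (dg true), n .gd],
    R .gd [t .d, n .z0],
    R .gd [t (dg true), n .x0],
    R .gd [t (dg false), n .gf],
    R .gf [t (dg false), n .x0],
    R .gf [t (dg true), n .x0],
    R .preK [t (dg true), n .cx0],
    R .cx0 [t .c, n .x0],
    R .preM [t (dg true), n .pm1],
    R .pm1 [t .c, n .y0],
    R .poK [t .d, n .z0],
    R .x0 [t (dg false), n .x0],
    R .x0 [t (dg true), n .x0],
    R .x0 [t .d],
    R .x0 [t .d, n .x1],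
    R .x1 [t (dg false), n .x1],
    R .x1 [t (dg true), n .x1],
    R .x1 [t .c, n .x0],
    R .y0 [],
    R .y0 [t (dg false), n .y1],
    R .y0 [t (dg true), n .y1],
    R .y0 [t .d, n .y2],
    R .y1 [t (dg false), n .y1],
    R .y1 [t (dg true), n .y1],
    R .y1 [t .d, n .y2],
    R .y2 [t (dg false), n .y2],
    R .y2 [t (dg true), n .y2],
    R .y2 [t .c, n .y0],
    R .z0 [],
    R .z0 [t (dg false), n .x1],
    R .z0 [t (dg true), n .x1],
    R .z0 [t .c, n .x0],
    R .nk [t (dg true), n .nk, t (dg false)],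
    R .nk [t (dg false), n (.nm .c), t (dg true)],
    R .nk [t .c, n .e2],
    R .nk [t .c],
    R .nk [t .c, t (dg false), n .d8],
    R .nk [t .c, t (dg true), n .d9],
    R .nk [t (dg true), n .d5],
    R .nk [t (dg false), n .d10],
    R .d5 [t (dg false), n .d5],
    R .d5 [t (dg true), n .d5],
    R .d5 [t .c],
    R .d5 [t .c, n .e6],
    R .d10 [t (dg false), n .d10],
    R .d10 [t (dg true), n .d10],
    R .d10 [t .c],
    R .d10 [t .c, n .e2],
    R .e2 [t (dg false)],
    R .e2 [t (dg false), n .e2],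
    R .e2 [t (dg true), n .e2],
    R .e6 [t (dg true)],
    R .e6 [t (dg false), n .e6],
    R .e6 [t (dg true), n .e6],
    R .d8 [],
    R .d8 [t (dg false), n .d8],
    R .d8 [t (dg true), n .d8],
    R .d9 [t (dg false), n .d8],
    R .d9 [t (dg true), n .d8] ]
  ++ mirrorRules Al.c ++ mirrorRules Al.d

/-- The grammar. -/
def gr : ContextFreeGrammar Al := ⟨Nt, .S, rulesList.toFinset⟩

lemma mem_gr {r : ContextFreeRule Al Nt} (h : r ∈ rulesList) : r ∈ gr.rules :=
  List.mem_toFinset.mpr h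

/-! ### Regularity of rules -/

lemma isReg_nil {A : Nt} : IsRegularRule (R A []) := Or.inl ⟨[], rfl⟩
lemma isReg_t {A : Nt} {a : Al} : IsRegularRule (R A [t a]) := Or.inl ⟨[a], rfl⟩
lemma isReg_tn {A : Nt} {a : Al} {B : Nt} : IsRegularRule (R A [t a, n B]) :=
  Or.inr ⟨[a], B, rfl⟩
lemma isReg_ttn {A : Nt} {a b : Al} {B : Nt} : IsRegularRule (R A [t a, t b, n B]) :=
  Or.inr ⟨[a, b], B, rfl⟩

lemma nonReg_tnt {A : Nt} {a : Al} {B : Nt} {b : Al} :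
    ¬ IsRegularRule (R A [t a, n B, t b]) := by
  rintro (⟨w, h⟩ | ⟨w, C, h⟩) <;>
    rcases w with _ | ⟨x, _ | ⟨y, _ | ⟨z, w⟩⟩⟩ <;>
    simp_all [R, t, n]

lemma nonReg_nnn {A B C D : Nt} : ¬ IsRegularRule (R A [n B, n C, n D]) := by
  rintro (⟨w, h⟩ | ⟨w, C', h⟩) <;>
    rcases w with _ | ⟨x, _ | ⟨y, _ | ⟨z, w⟩⟩⟩ <;>
    simp_all [R, t, n]

end DnregAux
namespace DnregAux

/-! ### Helper lemmas -/

lemma snoc_inj {α : Type*} {a b : List α} {x y : α} (h : a ++ [x] = b ++ [y]) :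
    a = b ∧ x = y := by
  have h' := congrArg List.reverse h
  simp only [List.reverse_append, List.reverse_singleton, List.singleton_append,
    List.cons.injEq] at h'
  exact ⟨by simpa using congrArg List.reverse h'.2, h'.1⟩

lemma krel_nil_inv {γ : List Bool} (h : KRel [] γ) : γ = [true] := by
  rcases h with ⟨k, z, h1, h2⟩ | ⟨m, h1, h2⟩
  · cases k <;> simp [List.replicate_succ] at h1
  · cases m with
    | zero => simpa using h2
    | succ m => simp [List.replicate_succ] at h1

lemma krel_ff_inv {v γ : List Bool} (h : KRel (false :: v) γ) : γ = v.reverse ++ [true] := by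
  rcases h with ⟨k, z, h1, h2⟩ | ⟨m, h1, h2⟩
  · cases k with
    | zero =>
      simp only [List.replicate, List.nil_append, List.cons.injEq, true_and] at h1
      rw [h2, h1]
      simp
    | succ k => simp [List.replicate_succ] at h1
  · cases m <;> simp [List.replicate_succ] at h1

lemma krel_tt_inv {α γ : List Bool} (h : KRel (true :: α) γ) :
    ∃ β, γ = β ++ [false] ∧ KRel α β := by
  rcases h with ⟨k, z, h1, h2⟩ | ⟨m, h1, h2⟩
  · cases k with
    | zero => simp [List.replicate] at h1
    | succ k =>
      simp only [List.replicate_succ, List.cons_append, List.cons.injEq, true_and] at h1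
      refine ⟨z.reverse ++ true :: List.replicate k false, ?_, Or.inl ⟨k, z, h1, rfl⟩⟩
      rw [h2, List.replicate_succ' (n := k) (a := false)]
      simp
  · cases m with
    | zero => simp [List.replicate] at h1
    | succ m =>
      simp only [List.replicate_succ, List.cons.injEq, true_and] at h1
      refine ⟨true :: List.replicate m false, ?_, Or.inr ⟨m, h1, rfl⟩⟩
      rw [h2, List.replicate_succ' (n := m) (a := false)]
      simp

/-! ### Intended languages of the nonterminals -/

def x0L : Language Al := {w | ∃ v P, w = dm v ++ Al.d :: cdW P}
def x1L : Language Al := {w | ∃ v x, x ∈ x0L ∧ w = dm v ++ Al.c :: x}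
def y0L : Language Al := {w | ∃ M, w = dcW M}
def y2L : Language Al := {w | ∃ v M, w = dm v ++ Al.c :: dcW M}
def y1L : Language Al := {w | ∃ v x, x ∈ y2L ∧ w = dm v ++ Al.d :: x}
def z0L : Language Al := {w | ∃ P, w = cdW P}
def e2L : Language Al := {w | ∃ v : List Bool, w = dm v ++ [dg false]}
def e6L : Language Al := {w | ∃ v : List Bool, w = dm v ++ [dg true]}
def d8L : Language Al := {w | ∃ v : List Bool, w = dm v}
def d9L : Language Al := {w | ∃ (b : Bool) (v : List Bool), w = dg b :: dm v}
def e5L (s : Al) : Language Al := {w | ∃ v : List Bool, w = dm v ++ [s]}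
def e1L (s : Al) : Language Al :=
  {w | ∃ v v' : List Bool, w = dm v ++ s :: (dm v' ++ [dg true])}
def e3L (s : Al) : Language Al :=
  {w | ∃ v v' : List Bool, w = dm v ++ s :: (dm v' ++ [dg false])}
def d5L : Language Al := {w | ∃ (v : List Bool) (x : List Al),
  (x = [] ∨ x ∈ e6L) ∧ w = dm v ++ Al.c :: x}
def d10L : Language Al := {w | ∃ (v : List Bool) (x : List Al),
  (x = [] ∨ x ∈ e2L) ∧ w = dm v ++ Al.c :: x}
def nmL (s : Al) : Language Al :=
  {w | ∃ σ τ : List Bool, τ ≠ σ.reverse ∧ w = dm σ ++ s :: dm τ}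
def nkL : Language Al := {w | ∃ α β : List Bool, ¬ KRel α β ∧ w = dm α ++ Al.c :: dm β}
def gbL : Language Al := {w | ∃ v P, v ≠ [true, false] ∧ w = dm v ++ Al.d :: cdW P}
def gdL : Language Al := {w | ∃ v P, v ≠ [false] ∧ w = dm v ++ Al.d :: cdW P}
def gfL : Language Al := {w | ∃ v P, v ≠ [] ∧ w = dm v ++ Al.d :: cdW P}
def gaL : Language Al := {w | ∃ x ∈ gbL, w = Al.c :: x}
def cx0L : Language Al := {w | ∃ x ∈ x0L, w = Al.c :: x}
def preKL : Language Al := {w | ∃ x ∈ x0L, w = dg true :: Al.c :: x}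
def pm1L : Language Al := {w | ∃ M, w = Al.c :: dcW M}
def preML : Language Al := {w | ∃ M, w = dg true :: Al.c :: dcW M}
def poKL : Language Al := {w | ∃ P, w = Al.d :: cdW P}

/-- The intended language of each nonterminal. -/
def Spec : Nt → Language Al
  | .S => BadShape
  | .ga => gaL
  | .gb => gbL
  | .gd => gdL
  | .gf => gfL
  | .preK => preKL
  | .cx0 => cx0L
  | .preM => preML
  | .pm1 => pm1L
  | .poK => poKL
  | .x0 => x0L
  | .x1 => x1L
  | .y0 => y0L
  | .y1 => y1L
  | .y2 => y2L
  | .z0 => z0L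
  | .nk => nkL
  | .d5 => d5L
  | .d10 => d10L
  | .e2 => e2L
  | .e6 => e6L
  | .d8 => d8L
  | .d9 => d9L
  | .nm s => nmL s
  | .e1 s => e1L s
  | .e3 s => e3L s
  | .e5 s => e5L s

/-! ### Normalized forms of `SForm` on the rule shapes that occur -/

variable {f : Nt → Language Al}

lemma sform_t1 {a : Al} {w : List Al} : SForm f [t a] w ↔ w = [a] := by
  simp [t, SForm]

lemma sform_tn {a : Al} {A : Nt} {w : List Al} :
    SForm f [t a, n A] w ↔ ∃ x ∈ f A, w = a :: x := by
  constructor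
  · rintro ⟨w', rfl, w₁, w₂, h₁, rfl, rfl⟩
    exact ⟨w₁, h₁, by simp⟩
  · rintro ⟨x, hx, rfl⟩
    exact ⟨x, rfl, x, [], hx, rfl, by simp⟩

lemma sform_ttn {a b : Al} {A : Nt} {w : List Al} :
    SForm f [t a, t b, n A] w ↔ ∃ x ∈ f A, w = a :: b :: x := by
  constructor
  · rintro ⟨w', rfl, w'', rfl, w₁, w₂, h₁, rfl, rfl⟩
    exact ⟨w₁, h₁, by simp⟩
  · rintro ⟨x, hx, rfl⟩
    exact ⟨b :: x, rfl, x, rfl, x, [], hx, rfl, by simp⟩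

lemma sform_tnt {a b : Al} {A : Nt} {w : List Al} :
    SForm f [t a, n A, t b] w ↔ ∃ x ∈ f A, w = a :: (x ++ [b]) := by
  constructor
  · rintro ⟨w', rfl, w₁, w₂, h₁, ⟨w₃, rfl, rfl⟩, rfl⟩
    exact ⟨w₁, h₁, by simp⟩
  · rintro ⟨x, hx, rfl⟩
    exact ⟨x ++ [b], rfl, x, [b], hx, ⟨[], rfl, rfl⟩, rfl⟩

lemma sform_nnn {A B C : Nt} {w : List Al} :
    SForm f [n A, n B, n C] w ↔
      ∃ x ∈ f A, ∃ y ∈ f B, ∃ z ∈ f C, w = x ++ y ++ z := by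
  constructor
  · rintro ⟨x, w', hx, ⟨y, w'', hy, ⟨z, w''', hz, rfl, rfl⟩, rfl⟩, rfl⟩
    exact ⟨x, hx, y, hy, z, hz, by simp⟩
  · rintro ⟨x, hx, y, hy, z, hz, rfl⟩
    exact ⟨x, y ++ z, hx, ⟨y, z, hy, ⟨z, [], hz, rfl, by simp⟩, rfl⟩, by simp⟩

end DnregAux
namespace DnregAux


lemma ob1 : ∀ w, SForm Spec [n .preK, n .nk, n .poK] w → w ∈ BadShape := by
  intro w hw
  rcases sform_nnn.mp hw with ⟨x, hx, y, hy, z, hz, rfl⟩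
  rcases hx with ⟨x', ⟨v, L, rfl⟩, rfl⟩
  rcases hy with ⟨α, β, hK, rfl⟩
  rcases hz with ⟨L₃, rfl⟩
  refine ⟨v, L ++ (α, β) :: L₃, ?_, ?_⟩
  · rw [cdW_append, cdW_cons']
    simp
  · by_contra hcon
    push_neg at hcon
    obtain ⟨hv, hP⟩ := hcon
    have hmem : (α, β) ∈ chain 2 (L ++ (α, β) :: L₃).length := by
      rw [← hP]; simp
    obtain ⟨u, hu, hp⟩ := chain_mem hmem
    rw [Prod.mk.injEq] at hp
    exact hK (by rw [hp.1, hp.2]; exact succ_krel (by omega))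

lemma ob2 : ∀ w, SForm Spec [n .preM, n (.nm .d), n .cx0] w → w ∈ BadShape := by
  intro w hw
  rcases sform_nnn.mp hw with ⟨x, hx, y, hy, z, hz, rfl⟩
  rcases hx with ⟨M, rfl⟩
  rcases hy with ⟨σ, τ, hτ, rfl⟩
  rcases hz with ⟨x', ⟨v', L', rfl⟩, rfl⟩
  refine ⟨hdv (M ++ [(σ, τ)]) v', reassoc (M ++ [(σ, τ)]) v' L', ?_, ?_⟩
  · have h := reassoc_eq (M ++ [(σ, τ)]) v' L'
    rw [dcW_append, dcW_cons, dcW_nil] at h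
    simp only [List.append_assoc, List.append_nil, List.cons_append, List.singleton_append,
      List.nil_append] at h ⊢
    rw [← h]
  · by_contra hcon
    push_neg at hcon
    exact reassoc_bad M v' L' 2 _ hτ hcon.1 hcon.2

lemma ob3 : ∀ w, SForm Spec [t (dg true), n .ga] w → w ∈ BadShape := by
  intro w hw
  rcases sform_tn.mp hw with ⟨x, hx, rfl⟩
  rcases hx with ⟨x', ⟨v, P, hv, rfl⟩, rfl⟩
  refine ⟨v, P, by simp, Or.inl ?_⟩
  rw [msb_two]; exact hv

lemma ob4 : ∀ w, SForm Spec [t Al.c, n .gb] w → w ∈ gaL := by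
  intro w hw
  rcases sform_tn.mp hw with ⟨x, hx, rfl⟩
  exact ⟨x, hx, rfl⟩

lemma ob5 : ∀ w, SForm Spec [t Al.d, n .z0] w → w ∈ gbL := by
  intro w hw
  rcases sform_tn.mp hw with ⟨x, hx, rfl⟩
  rcases hx with ⟨P, rfl⟩
  exact ⟨[], P, by simp, rfl⟩

lemma ob6 : ∀ w, SForm Spec [t (dg false), n .x0] w → w ∈ gbL := by
  intro w hw
  rcases sform_tn.mp hw with ⟨x, hx, rfl⟩
  rcases hx with ⟨v, P, rfl⟩
  exact ⟨false :: v, P, by simp, rfl⟩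

lemma ob7 : ∀ w, SForm Spec [t (dg true), n .gd] w → w ∈ gbL := by
  intro w hw
  rcases sform_tn.mp hw with ⟨x, hx, rfl⟩
  rcases hx with ⟨v, P, hv, rfl⟩
  exact ⟨true :: v, P, by simpa using hv, rfl⟩

lemma ob8 : ∀ w, SForm Spec [t Al.d, n .z0] w → w ∈ gdL := by
  intro w hw
  rcases sform_tn.mp hw with ⟨x, hx, rfl⟩
  rcases hx with ⟨P, rfl⟩
  exact ⟨[], P, by simp, rfl⟩

lemma ob9 : ∀ w, SForm Spec [t (dg true), n .x0] w → w ∈ gdL := by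
  intro w hw
  rcases sform_tn.mp hw with ⟨x, hx, rfl⟩
  rcases hx with ⟨v, P, rfl⟩
  exact ⟨true :: v, P, by simp, rfl⟩

lemma ob10 : ∀ w, SForm Spec [t (dg false), n .gf] w → w ∈ gdL := by
  intro w hw
  rcases sform_tn.mp hw with ⟨x, hx, rfl⟩
  rcases hx with ⟨v, P, hv, rfl⟩
  exact ⟨false :: v, P, by simpa using hv, rfl⟩

lemma ob11 : ∀ w, SForm Spec [t (dg false), n .x0] w → w ∈ gfL := by
  intro w hw
  rcases sform_tn.mp hw with ⟨x, hx, rfl⟩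
  rcases hx with ⟨v, P, rfl⟩
  exact ⟨false :: v, P, by simp, rfl⟩

lemma ob12 : ∀ w, SForm Spec [t (dg true), n .x0] w → w ∈ gfL := by
  intro w hw
  rcases sform_tn.mp hw with ⟨x, hx, rfl⟩
  rcases hx with ⟨v, P, rfl⟩
  exact ⟨true :: v, P, by simp, rfl⟩

lemma ob13 : ∀ w, SForm Spec [t (dg true), n .cx0] w → w ∈ preKL := by
  intro w hw
  rcases sform_tn.mp hw with ⟨x, hx, rfl⟩
  rcases hx with ⟨x', hx', rfl⟩
  exact ⟨x', hx', rfl⟩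

lemma ob14 : ∀ w, SForm Spec [t Al.c, n .x0] w → w ∈ cx0L := by
  intro w hw
  rcases sform_tn.mp hw with ⟨x, hx, rfl⟩
  exact ⟨x, hx, rfl⟩

lemma ob15 : ∀ w, SForm Spec [t (dg true), n .pm1] w → w ∈ preML := by
  intro w hw
  rcases sform_tn.mp hw with ⟨x, hx, rfl⟩
  rcases hx with ⟨M, rfl⟩
  exact ⟨M, rfl⟩

lemma ob16 : ∀ w, SForm Spec [t Al.c, n .y0] w → w ∈ pm1L := by
  intro w hw
  rcases sform_tn.mp hw with ⟨x, hx, rfl⟩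
  rcases hx with ⟨M, rfl⟩
  exact ⟨M, rfl⟩

lemma ob17 : ∀ w, SForm Spec [t Al.d, n .z0] w → w ∈ poKL := by
  intro w hw
  rcases sform_tn.mp hw with ⟨x, hx, rfl⟩
  rcases hx with ⟨P, rfl⟩
  exact ⟨P, rfl⟩

lemma ob18 : ∀ w, SForm Spec [t (dg false), n .x0] w → w ∈ x0L := by
  intro w hw
  rcases sform_tn.mp hw with ⟨x, hx, rfl⟩
  rcases hx with ⟨v, P, rfl⟩
  exact ⟨false :: v, P, rfl⟩

lemma ob19 : ∀ w, SForm Spec [t (dg true), n .x0] w → w ∈ x0L := by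
  intro w hw
  rcases sform_tn.mp hw with ⟨x, hx, rfl⟩
  rcases hx with ⟨v, P, rfl⟩
  exact ⟨true :: v, P, rfl⟩

lemma ob20 : ∀ w, SForm Spec [t Al.d] w → w ∈ x0L := by
  intro w hw
  rw [sform_t1.mp hw]
  exact ⟨[], [], rfl⟩

lemma ob21 : ∀ w, SForm Spec [t Al.d, n .x1] w → w ∈ x0L := by
  intro w hw
  rcases sform_tn.mp hw with ⟨x, hx, rfl⟩
  rcases hx with ⟨v, x', ⟨v', P, rfl⟩, rfl⟩
  exact ⟨[], (v, v') :: P, by rw [cdW_cons']; simp⟩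

lemma ob22 : ∀ w, SForm Spec [t (dg false), n .x1] w → w ∈ x1L := by
  intro w hw
  rcases sform_tn.mp hw with ⟨x, hx, rfl⟩
  rcases hx with ⟨v, x', hx', rfl⟩
  exact ⟨false :: v, x', hx', rfl⟩

lemma ob23 : ∀ w, SForm Spec [t (dg true), n .x1] w → w ∈ x1L := by
  intro w hw
  rcases sform_tn.mp hw with ⟨x, hx, rfl⟩
  rcases hx with ⟨v, x', hx', rfl⟩
  exact ⟨true :: v, x', hx', rfl⟩

lemma ob24 : ∀ w, SForm Spec [t Al.c, n .x0] w → w ∈ x1L := by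
  intro w hw
  rcases sform_tn.mp hw with ⟨x, hx, rfl⟩
  exact ⟨[], x, hx, rfl⟩

lemma ob25 : ∀ w, SForm Spec [] w → w ∈ y0L := by
  intro w hw
  rw [show w = [] from hw]
  exact ⟨[], rfl⟩

lemma ob26 : ∀ w, SForm Spec [t (dg false), n .y1] w → w ∈ y0L := by
  intro w hw
  rcases sform_tn.mp hw with ⟨x, hx, rfl⟩
  rcases hx with ⟨v, x', ⟨v', M, rfl⟩, rfl⟩
  exact ⟨(false :: v, v') :: M, by rw [dcW_cons]; simp⟩

lemma ob27 : ∀ w, SForm Spec [t (dg true), n .y1] w → w ∈ y0L := by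
  intro w hw
  rcases sform_tn.mp hw with ⟨x, hx, rfl⟩
  rcases hx with ⟨v, x', ⟨v', M, rfl⟩, rfl⟩
  exact ⟨(true :: v, v') :: M, by rw [dcW_cons]; simp⟩

lemma ob28 : ∀ w, SForm Spec [t Al.d, n .y2] w → w ∈ y0L := by
  intro w hw
  rcases sform_tn.mp hw with ⟨x, hx, rfl⟩
  rcases hx with ⟨v', M, rfl⟩
  exact ⟨([], v') :: M, by rw [dcW_cons]; simp⟩

lemma ob29 : ∀ w, SForm Spec [t (dg false), n .y1] w → w ∈ y1L := by
  intro w hw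
  rcases sform_tn.mp hw with ⟨x, hx, rfl⟩
  rcases hx with ⟨v, x', hx', rfl⟩
  exact ⟨false :: v, x', hx', rfl⟩

lemma ob30 : ∀ w, SForm Spec [t (dg true), n .y1] w → w ∈ y1L := by
  intro w hw
  rcases sform_tn.mp hw with ⟨x, hx, rfl⟩
  rcases hx with ⟨v, x', hx', rfl⟩
  exact ⟨true :: v, x', hx', rfl⟩

lemma ob31 : ∀ w, SForm Spec [t Al.d, n .y2] w → w ∈ y1L := by
  intro w hw
  rcases sform_tn.mp hw with ⟨x, hx, rfl⟩
  exact ⟨[], x, hx, rfl⟩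

lemma ob32 : ∀ w, SForm Spec [t (dg false), n .y2] w → w ∈ y2L := by
  intro w hw
  rcases sform_tn.mp hw with ⟨x, hx, rfl⟩
  rcases hx with ⟨v, M, rfl⟩
  exact ⟨false :: v, M, rfl⟩

lemma ob33 : ∀ w, SForm Spec [t (dg true), n .y2] w → w ∈ y2L := by
  intro w hw
  rcases sform_tn.mp hw with ⟨x, hx, rfl⟩
  rcases hx with ⟨v, M, rfl⟩
  exact ⟨true :: v, M, rfl⟩

lemma ob34 : ∀ w, SForm Spec [t Al.c, n .y0] w → w ∈ y2L := by
  intro w hw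
  rcases sform_tn.mp hw with ⟨x, hx, rfl⟩
  rcases hx with ⟨M, rfl⟩
  exact ⟨[], M, rfl⟩

lemma ob35 : ∀ w, SForm Spec [] w → w ∈ z0L := by
  intro w hw
  rw [show w = [] from hw]
  exact ⟨[], rfl⟩

lemma ob36 : ∀ w, SForm Spec [t (dg false), n .x1] w → w ∈ z0L := by
  intro w hw
  rcases sform_tn.mp hw with ⟨x, hx, rfl⟩
  rcases hx with ⟨v, x', ⟨v', P, rfl⟩, rfl⟩
  exact ⟨(false :: v, v') :: P, by rw [cdW_cons']; simp⟩

lemma ob37 : ∀ w, SForm Spec [t (dg true), n .x1] w → w ∈ z0L := by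
  intro w hw
  rcases sform_tn.mp hw with ⟨x, hx, rfl⟩
  rcases hx with ⟨v, x', ⟨v', P, rfl⟩, rfl⟩
  exact ⟨(true :: v, v') :: P, by rw [cdW_cons']; simp⟩

lemma ob38 : ∀ w, SForm Spec [t Al.c, n .x0] w → w ∈ z0L := by
  intro w hw
  rcases sform_tn.mp hw with ⟨x, hx, rfl⟩
  rcases hx with ⟨v', P, rfl⟩
  exact ⟨([], v') :: P, by rw [cdW_cons']; simp⟩

lemma ob39 : ∀ w, SForm Spec [t (dg true), n .nk, t (dg false)] w → w ∈ nkL := by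
  intro w hw
  rcases sform_tnt.mp hw with ⟨x, hx, rfl⟩
  rcases hx with ⟨α, β, hK, rfl⟩
  refine ⟨true :: α, β ++ [false], ?_, by simp⟩
  intro h
  obtain ⟨β', hβ', hk⟩ := krel_tt_inv h
  obtain ⟨rfl, -⟩ := snoc_inj hβ'
  exact hK hk

lemma ob40 : ∀ w, SForm Spec [t (dg false), n (.nm Al.c), t (dg true)] w → w ∈ nkL := by
  intro w hw
  rcases sform_tnt.mp hw with ⟨x, hx, rfl⟩
  rcases hx with ⟨σ, γ, hτ, rfl⟩
  refine ⟨false :: σ, γ ++ [true], ?_, by simp⟩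
  intro h
  have h' := krel_ff_inv h
  exact hτ (snoc_inj h').1

lemma ob41 : ∀ w, SForm Spec [t Al.c, n .e2] w → w ∈ nkL := by
  intro w hw
  rcases sform_tn.mp hw with ⟨x, hx, rfl⟩
  rcases hx with ⟨v, rfl⟩
  refine ⟨[], v ++ [false], ?_, by simp⟩
  intro h
  have h' := krel_nil_inv h
  have : v ++ [false] = [] ++ [true] := by simpa using h'
  simpa using (snoc_inj this).2

lemma ob42 : ∀ w, SForm Spec [t Al.c] w → w ∈ nkL := by
  intro w hw
  rw [sform_t1.mp hw]
  refine ⟨[], [], ?_, rfl⟩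
  intro h
  simpa using krel_nil_inv h

lemma ob43 : ∀ w, SForm Spec [t Al.c, t (dg false), n .d8] w → w ∈ nkL := by
  intro w hw
  rcases sform_ttn.mp hw with ⟨x, hx, rfl⟩
  rcases hx with ⟨v, rfl⟩
  refine ⟨[], false :: v, ?_, rfl⟩
  intro h
  simpa using krel_nil_inv h

lemma ob44 : ∀ w, SForm Spec [t Al.c, t (dg true), n .d9] w → w ∈ nkL := by
  intro w hw
  rcases sform_ttn.mp hw with ⟨x, hx, rfl⟩
  rcases hx with ⟨b, v, rfl⟩
  refine ⟨[], true :: b :: v, ?_, rfl⟩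
  intro h
  simpa using krel_nil_inv h

lemma ob45 : ∀ w, SForm Spec [t (dg true), n .d5] w → w ∈ nkL := by
  intro w hw
  rcases sform_tn.mp hw with ⟨x, hx, rfl⟩
  rcases hx with ⟨v, x', hx', rfl⟩
  rcases hx' with rfl | ⟨v', rfl⟩
  · refine ⟨true :: v, [], ?_, by simp⟩
    intro h
    obtain ⟨β', hβ', -⟩ := krel_tt_inv h
    simp at hβ'
  · refine ⟨true :: v, v' ++ [true], ?_, by simp⟩
    intro h
    obtain ⟨β', hβ', -⟩ := krel_tt_inv h
    simpa using (snoc_inj hβ').2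

lemma ob46 : ∀ w, SForm Spec [t (dg false), n .d10] w → w ∈ nkL := by
  intro w hw
  rcases sform_tn.mp hw with ⟨x, hx, rfl⟩
  rcases hx with ⟨v, x', hx', rfl⟩
  rcases hx' with rfl | ⟨v', rfl⟩
  · refine ⟨false :: v, [], ?_, by simp⟩
    intro h
    have h' := krel_ff_inv h
    simp at h'
  · refine ⟨false :: v, v' ++ [false], ?_, by simp⟩
    intro h
    have h' := krel_ff_inv h
    simpa using (snoc_inj h').2

lemma ob47 : ∀ w, SForm Spec [t (dg false), n .d5] w → w ∈ d5L := by
  intro w hw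
  rcases sform_tn.mp hw with ⟨x, hx, rfl⟩
  rcases hx with ⟨v, x', hx', rfl⟩
  exact ⟨false :: v, x', hx', rfl⟩

lemma ob48 : ∀ w, SForm Spec [t (dg true), n .d5] w → w ∈ d5L := by
  intro w hw
  rcases sform_tn.mp hw with ⟨x, hx, rfl⟩
  rcases hx with ⟨v, x', hx', rfl⟩
  exact ⟨true :: v, x', hx', rfl⟩

lemma ob49 : ∀ w, SForm Spec [t Al.c] w → w ∈ d5L := by
  intro w hw
  rw [sform_t1.mp hw]
  exact ⟨[], [], Or.inl rfl, rfl⟩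

lemma ob50 : ∀ w, SForm Spec [t Al.c, n .e6] w → w ∈ d5L := by
  intro w hw
  rcases sform_tn.mp hw with ⟨x, hx, rfl⟩
  exact ⟨[], x, Or.inr hx, rfl⟩

lemma ob51 : ∀ w, SForm Spec [t (dg false), n .d10] w → w ∈ d10L := by
  intro w hw
  rcases sform_tn.mp hw with ⟨x, hx, rfl⟩
  rcases hx with ⟨v, x', hx', rfl⟩
  exact ⟨false :: v, x', hx', rfl⟩

lemma ob52 : ∀ w, SForm Spec [t (dg true), n .d10] w → w ∈ d10L := by
  intro w hw
  rcases sform_tn.mp hw with ⟨x, hx, rfl⟩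
  rcases hx with ⟨v, x', hx', rfl⟩
  exact ⟨true :: v, x', hx', rfl⟩

lemma ob53 : ∀ w, SForm Spec [t Al.c] w → w ∈ d10L := by
  intro w hw
  rw [sform_t1.mp hw]
  exact ⟨[], [], Or.inl rfl, rfl⟩

lemma ob54 : ∀ w, SForm Spec [t Al.c, n .e2] w → w ∈ d10L := by
  intro w hw
  rcases sform_tn.mp hw with ⟨x, hx, rfl⟩
  exact ⟨[], x, Or.inr hx, rfl⟩

lemma ob55 : ∀ w, SForm Spec [t (dg false)] w → w ∈ e2L := by
  intro w hw
  rw [sform_t1.mp hw]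
  exact ⟨[], rfl⟩

lemma ob56 : ∀ w, SForm Spec [t (dg false), n .e2] w → w ∈ e2L := by
  intro w hw
  rcases sform_tn.mp hw with ⟨x, hx, rfl⟩
  rcases hx with ⟨v, rfl⟩
  exact ⟨false :: v, rfl⟩

lemma ob57 : ∀ w, SForm Spec [t (dg true), n .e2] w → w ∈ e2L := by
  intro w hw
  rcases sform_tn.mp hw with ⟨x, hx, rfl⟩
  rcases hx with ⟨v, rfl⟩
  exact ⟨true :: v, rfl⟩

lemma ob58 : ∀ w, SForm Spec [t (dg true)] w → w ∈ e6L := by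
  intro w hw
  rw [sform_t1.mp hw]
  exact ⟨[], rfl⟩

lemma ob59 : ∀ w, SForm Spec [t (dg false), n .e6] w → w ∈ e6L := by
  intro w hw
  rcases sform_tn.mp hw with ⟨x, hx, rfl⟩
  rcases hx with ⟨v, rfl⟩
  exact ⟨false :: v, rfl⟩

lemma ob60 : ∀ w, SForm Spec [t (dg true), n .e6] w → w ∈ e6L := by
  intro w hw
  rcases sform_tn.mp hw with ⟨x, hx, rfl⟩
  rcases hx with ⟨v, rfl⟩
  exact ⟨true :: v, rfl⟩

lemma ob61 : ∀ w, SForm Spec [] w → w ∈ d8L := by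
  intro w hw
  rw [show w = [] from hw]
  exact ⟨[], rfl⟩

lemma ob62 : ∀ w, SForm Spec [t (dg false), n .d8] w → w ∈ d8L := by
  intro w hw
  rcases sform_tn.mp hw with ⟨x, hx, rfl⟩
  rcases hx with ⟨v, rfl⟩
  exact ⟨false :: v, rfl⟩

lemma ob63 : ∀ w, SForm Spec [t (dg true), n .d8] w → w ∈ d8L := by
  intro w hw
  rcases sform_tn.mp hw with ⟨x, hx, rfl⟩
  rcases hx with ⟨v, rfl⟩
  exact ⟨true :: v, rfl⟩

lemma ob64 : ∀ w, SForm Spec [t (dg false), n .d8] w → w ∈ d9L := by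
  intro w hw
  rcases sform_tn.mp hw with ⟨x, hx, rfl⟩
  rcases hx with ⟨v, rfl⟩
  exact ⟨false, v, rfl⟩

lemma ob65 : ∀ w, SForm Spec [t (dg true), n .d8] w → w ∈ d9L := by
  intro w hw
  rcases sform_tn.mp hw with ⟨x, hx, rfl⟩
  rcases hx with ⟨v, rfl⟩
  exact ⟨true, v, rfl⟩

lemma obm1 (s : Al) : ∀ w, SForm Spec [t (dg false), n (.nm s), t (dg false)] w → w ∈ nmL s := by
  intro w hw
  rcases sform_tnt.mp hw with ⟨x, hx, rfl⟩
  rcases hx with ⟨σ, τ, hτ, rfl⟩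
  refine ⟨false :: σ, τ ++ [false], ?_, by simp⟩
  intro h
  rw [List.reverse_cons] at h
  exact hτ (snoc_inj h).1

lemma obm2 (s : Al) : ∀ w, SForm Spec [t (dg true), n (.nm s), t (dg true)] w → w ∈ nmL s := by
  intro w hw
  rcases sform_tnt.mp hw with ⟨x, hx, rfl⟩
  rcases hx with ⟨σ, τ, hτ, rfl⟩
  refine ⟨true :: σ, τ ++ [true], ?_, by simp⟩
  intro h
  rw [List.reverse_cons] at h
  exact hτ (snoc_inj h).1

lemma obm3 (s : Al) : ∀ w, SForm Spec [t (dg false), n (.e1 s)] w → w ∈ nmL s := by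
  intro w hw
  rcases sform_tn.mp hw with ⟨x, hx, rfl⟩
  rcases hx with ⟨v, v', rfl⟩
  refine ⟨false :: v, v' ++ [true], ?_, by simp⟩
  intro h
  rw [List.reverse_cons] at h
  simpa using (snoc_inj h).2

lemma obm4 (s : Al) : ∀ w, SForm Spec [t (dg true), n (.e3 s)] w → w ∈ nmL s := by
  intro w hw
  rcases sform_tn.mp hw with ⟨x, hx, rfl⟩
  rcases hx with ⟨v, v', rfl⟩
  refine ⟨true :: v, v' ++ [false], ?_, by simp⟩
  intro h
  rw [List.reverse_cons] at h
  simpa using (snoc_inj h).2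

lemma obm5 (s : Al) : ∀ w, SForm Spec [t s, n .d9] w → w ∈ nmL s := by
  intro w hw
  rcases sform_tn.mp hw with ⟨x, hx, rfl⟩
  rcases hx with ⟨b, v, rfl⟩
  exact ⟨[], b :: v, by simp, rfl⟩

lemma obm6 (s : Al) : ∀ w, SForm Spec [t (dg false), n (.e5 s)] w → w ∈ nmL s := by
  intro w hw
  rcases sform_tn.mp hw with ⟨x, hx, rfl⟩
  rcases hx with ⟨v, rfl⟩
  refine ⟨false :: v, [], ?_, by simp⟩
  simp

lemma obm7 (s : Al) : ∀ w, SForm Spec [t (dg true), n (.e5 s)] w → w ∈ nmL s := by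
  intro w hw
  rcases sform_tn.mp hw with ⟨x, hx, rfl⟩
  rcases hx with ⟨v, rfl⟩
  refine ⟨true :: v, [], ?_, by simp⟩
  simp

lemma obm8 (s : Al) : ∀ w, SForm Spec [t (dg false), n (.e1 s)] w → w ∈ e1L s := by
  intro w hw
  rcases sform_tn.mp hw with ⟨x, hx, rfl⟩
  rcases hx with ⟨v, v', rfl⟩
  exact ⟨false :: v, v', rfl⟩

lemma obm9 (s : Al) : ∀ w, SForm Spec [t (dg true), n (.e1 s)] w → w ∈ e1L s := by
  intro w hw
  rcases sform_tn.mp hw with ⟨x, hx, rfl⟩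
  rcases hx with ⟨v, v', rfl⟩
  exact ⟨true :: v, v', rfl⟩

lemma obm10 (s : Al) : ∀ w, SForm Spec [t s, n .e6] w → w ∈ e1L s := by
  intro w hw
  rcases sform_tn.mp hw with ⟨x, hx, rfl⟩
  rcases hx with ⟨v', rfl⟩
  exact ⟨[], v', rfl⟩

lemma obm11 (s : Al) : ∀ w, SForm Spec [t (dg false), n (.e3 s)] w → w ∈ e3L s := by
  intro w hw
  rcases sform_tn.mp hw with ⟨x, hx, rfl⟩
  rcases hx with ⟨v, v', rfl⟩
  exact ⟨false :: v, v', rfl⟩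

lemma obm12 (s : Al) : ∀ w, SForm Spec [t (dg true), n (.e3 s)] w → w ∈ e3L s := by
  intro w hw
  rcases sform_tn.mp hw with ⟨x, hx, rfl⟩
  rcases hx with ⟨v, v', rfl⟩
  exact ⟨true :: v, v', rfl⟩

lemma obm13 (s : Al) : ∀ w, SForm Spec [t s, n .e2] w → w ∈ e3L s := by
  intro w hw
  rcases sform_tn.mp hw with ⟨x, hx, rfl⟩
  rcases hx with ⟨v', rfl⟩
  exact ⟨[], v', rfl⟩

lemma obm14 (s : Al) : ∀ w, SForm Spec [t s] w → w ∈ e5L s := by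
  intro w hw
  rw [sform_t1.mp hw]
  exact ⟨[], rfl⟩

lemma obm15 (s : Al) : ∀ w, SForm Spec [t (dg false), n (.e5 s)] w → w ∈ e5L s := by
  intro w hw
  rcases sform_tn.mp hw with ⟨x, hx, rfl⟩
  rcases hx with ⟨v, rfl⟩
  exact ⟨false :: v, rfl⟩

lemma obm16 (s : Al) : ∀ w, SForm Spec [t (dg true), n (.e5 s)] w → w ∈ e5L s := by
  intro w hw
  rcases sform_tn.mp hw with ⟨x, hx, rfl⟩
  rcases hx with ⟨v, rfl⟩
  exact ⟨true :: v, rfl⟩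

instance : DecidableEq (ContextFreeRule Al gr.NT) :=
  inferInstanceAs (DecidableEq (ContextFreeRule Al Nt))

set_option maxHeartbeats 2000000 in
lemma spec_closed : ∀ r ∈ gr.rules, ∀ w, SForm Spec r.output w → w ∈ Spec r.input := by
  intro (r : ContextFreeRule Al Nt) hr
  have hr2 : r ∈ rulesList := List.mem_toFinset.mp hr
  simp only [rulesList, mirrorRules, List.mem_append, List.mem_cons, List.not_mem_nil,
    or_false, or_assoc] at hr2
  rcases hr2 with rfl | rfl | rfl | rfl | rfl | rfl | rfl | rfl | rfl | rfl | rfl | rfl | rfl | rfl | rfl | rfl | rfl | rfl | rfl | rfl | rfl | rfl | rfl | rfl | rfl | rfl | rfl | rfl | rfl | rfl | rfl | rfl | rfl | rfl | rfl | rfl | rfl | rfl | rfl | rfl | rfl | rfl | rfl | rfl | rfl | rfl | rfl | rfl | rfl | rfl | rfl | rfl | rfl | rfl | rfl | rfl | rfl | rfl | rfl | rfl | rfl | rfl | rfl | rfl | rfl | rfl | rfl | rfl | rfl | rfl | rfl | rfl | rfl | rfl | rfl | rfl | rfl | rfl | rfl | rfl | rfl | rfl | rfl | rfl | rfl | rfl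 | rfl | rfl | rfl | rfl | rfl | rfl | rfl | rfl | rfl | rfl | rfl
  exacts [ob1, ob2, ob3, ob4, ob5, ob6, ob7, ob8, ob9, ob10, ob11, ob12, ob13, ob14, ob15, ob16, ob17, ob18, ob19, ob20, ob21, ob22, ob23, ob24, ob25, ob26, ob27, ob28, ob29, ob30, ob31, ob32, ob33, ob34, ob35, ob36, ob37, ob38, ob39, ob40, ob41, ob42, ob43, ob44, ob45, ob46, ob47, ob48, ob49, ob50, ob51, ob52, ob53, ob54, ob55, ob56, ob57, ob58, ob59, ob60, ob61, ob62, ob63, ob64, ob65, obm1 Al.c, obm2 Al.c, obm3 Al.c, obm4 Al.c, obm5 Al.c, obm6 Al.c, obm7 Al.c, obm8 Al.c, obm9 Al.c, obm10 Al.c, obm11 Al.c, obm12 Al.c, obm13 Al.c, obm14 Al.c, obm15 Al.c, obm16 Al.c, obm1 Al.d, obm2 Al.d, obm3 Al.d, obm4 Al.d, obm5 Al.d, obm6 Al.d, obm7 Al.d, obm8 Al.d, obm9 Al.d, obm10 Al.d, obm11 Al.d, obm12 Al.d, obm13 Al.d, obm14 Al.d, obm15 Al.d, obm16 Al.d]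

end DnregAux
namespace DnregAux

/-! ### Derivation builders -/

/-- Terminal embedding into sentential forms. -/
def tm (w : List Al) : List (Symbol Al Nt) := w.map Symbol.terminal

@[simp] lemma tm_nil : tm [] = [] := rfl
@[simp] lemma tm_cons (a : Al) (w : List Al) : tm (a :: w) = t a :: tm w := rfl
@[simp] lemma tm_append (u v : List Al) : tm (u ++ v) = tm u ++ tm v := List.map_append ..

/-- Regular step `A → a B`. -/
lemma derTN {A B : Nt} {a : Al} {w : List Al} {k : ℕ} (hmem : R A [t a, n B] ∈ rulesList)
    (h : DerivesN gr [n B] (tm w) k) : DerivesN gr [n A] (tm (a :: w)) k := by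
  refine DerivesN.stepReg (mem_gr hmem) isReg_tn ?_
  have := DerivesN.append_left h [t a]
  exact this

/-- Regular step `A → a b C`. -/
lemma derTTN {A C : Nt} {a b : Al} {w : List Al} {k : ℕ}
    (hmem : R A [t a, t b, n C] ∈ rulesList)
    (h : DerivesN gr [n C] (tm w) k) : DerivesN gr [n A] (tm (a :: b :: w)) k := by
  refine DerivesN.stepReg (mem_gr hmem) isReg_ttn ?_
  have := DerivesN.append_left h [t a, t b]
  exact this

/-- Regular step `A → a`. -/
lemma derT1 {A : Nt} {a : Al} (hmem : R A [t a] ∈ rulesList) :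
    DerivesN gr [n A] (tm [a]) 0 :=
  DerivesN.stepReg (mem_gr hmem) isReg_t (DerivesN.refl _)

/-- Regular step `A → ε`. -/
lemma derE {A : Nt} (hmem : R A [] ∈ rulesList) :
    DerivesN gr [n A] (tm []) 0 :=
  DerivesN.stepReg (mem_gr hmem) isReg_nil (DerivesN.refl _)

/-- Non-regular step `A → a B b`. -/
lemma derTNT {A B : Nt} {a b : Al} {w : List Al} {k : ℕ}
    (hmem : R A [t a, n B, t b] ∈ rulesList)
    (h : DerivesN gr [n B] (tm w) k) :
    DerivesN gr [n A] (tm (a :: (w ++ [b]))) (k + 1) := by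
  refine DerivesN.stepNonreg (mem_gr hmem) nonReg_tnt ?_
  have := DerivesN.append_left (DerivesN.append_right h [t b]) [t a]
  exact (show [t a] ++ (tm w ++ [t b]) = tm (a :: (w ++ [b])) by simp) ▸ this

/-- Non-regular step `A → B C D`. -/
lemma derNNN {A B C D : Nt} {x y z : List Al} {k₁ k₂ k₃ : ℕ}
    (hmem : R A [n B, n C, n D] ∈ rulesList)
    (h₁ : DerivesN gr [n B] (tm x) k₁) (h₂ : DerivesN gr [n C] (tm y) k₂)
    (h₃ : DerivesN gr [n D] (tm z) k₃) :
    DerivesN gr [n A] (tm (x ++ y ++ z)) (k₁ + k₂ + k₃ + 1) := by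
  refine DerivesN.stepNonreg (mem_gr hmem) nonReg_nnn ?_
  have := DerivesN.concat (DerivesN.concat h₁ h₂) h₃
  exact (show tm x ++ tm y ++ tm z = tm (x ++ y ++ z) by simp) ▸ this

/-- Digit loops. -/
lemma derLoop {A : Nt} (hmem : ∀ b : Bool, R A [t (dg b), n A] ∈ rulesList) :
    ∀ (v : List Bool) {w : List Al} {k : ℕ},
      DerivesN gr [n A] (tm w) k → DerivesN gr [n A] (tm (dm v ++ w)) k := by
  intro v
  induction v with
  | nil => intro w k h; simpa using h
  | cons b v ih =>
    intro w k h
    have := derTN (hmem b) (ih h)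
    simpa using this

lemma mem_x0_loop : ∀ b : Bool, R .x0 [t (dg b), n .x0] ∈ rulesList := by
  intro b; cases b <;> simp [rulesList, mirrorRules, dg]
lemma mem_x1_loop : ∀ b : Bool, R .x1 [t (dg b), n .x1] ∈ rulesList := by
  intro b; cases b <;> simp [rulesList, mirrorRules, dg]
lemma mem_y1_loop : ∀ b : Bool, R .y1 [t (dg b), n .y1] ∈ rulesList := by
  intro b; cases b <;> simp [rulesList, mirrorRules, dg]
lemma mem_y2_loop : ∀ b : Bool, R .y2 [t (dg b), n .y2] ∈ rulesList := by
  intro b; cases b <;> simp [rulesList, mirrorRules, dg]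
lemma mem_d5_loop : ∀ b : Bool, R .d5 [t (dg b), n .d5] ∈ rulesList := by
  intro b; cases b <;> simp [rulesList, mirrorRules, dg]
lemma mem_d10_loop : ∀ b : Bool, R .d10 [t (dg b), n .d10] ∈ rulesList := by
  intro b; cases b <;> simp [rulesList, mirrorRules, dg]
lemma mem_e2_loop : ∀ b : Bool, R .e2 [t (dg b), n .e2] ∈ rulesList := by
  intro b; cases b <;> simp [rulesList, mirrorRules, dg]
lemma mem_e6_loop : ∀ b : Bool, R .e6 [t (dg b), n .e6] ∈ rulesList := by
  intro b; cases b <;> simp [rulesList, mirrorRules, dg]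
lemma mem_d8_loop : ∀ b : Bool, R .d8 [t (dg b), n .d8] ∈ rulesList := by
  intro b; cases b <;> simp [rulesList, mirrorRules, dg]

/-- Builder for `x0`. -/
lemma d_x0 : ∀ (P : List (List Bool × List Bool)) (v : List Bool),
    DerivesN gr [n .x0] (tm (dm v ++ Al.d :: cdW P)) 0 := by
  intro P
  induction P with
  | nil =>
    intro v
    apply derLoop mem_x0_loop
    exact derT1 (by simp [rulesList, mirrorRules])
  | cons p P ih =>
    intro v
    rcases p with ⟨p₁, p₂⟩
    apply derLoop mem_x0_loop
    rw [cdW_cons']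
    have hx1 : DerivesN gr [n .x1] (tm (dm p₁ ++ Al.c :: (dm p₂ ++ Al.d :: cdW P))) 0 := by
      apply derLoop mem_x1_loop
      have := derTN (A := .x1) (B := .x0) (a := Al.c)
        (by simp [rulesList, mirrorRules]) (ih p₂)
      simpa using this
    have := derTN (A := .x0) (B := .x1) (a := Al.d)
      (by simp [rulesList, mirrorRules]) hx1
    simpa using this

/-- Builder for `z0`. -/
lemma d_z0 : ∀ (P : List (List Bool × List Bool)),
    DerivesN gr [n .z0] (tm (cdW P)) 0 := by
  intro P
  cases P with
  | nil => exact derE (by simp [rulesList, mirrorRules])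
  | cons p P =>
    rcases p with ⟨p₁, p₂⟩
    rw [cdW_cons']
    have hx0 := d_x0 P p₂
    cases p₁ with
    | nil =>
      have := derTN (A := .z0) (B := .x0) (a := Al.c)
        (by simp [rulesList, mirrorRules]) hx0
      simpa using this
    | cons b v =>
      have hx1 : DerivesN gr [n .x1] (tm (dm v ++ Al.c :: (dm p₂ ++ Al.d :: cdW P))) 0 := by
        apply derLoop mem_x1_loop
        have := derTN (A := .x1) (B := .x0) (a := Al.c)
          (by simp [rulesList, mirrorRules]) hx0
        simpa using this
      have := derTN (A := .z0) (B := .x1) (a := dg b)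
        (by cases b <;> simp [rulesList, mirrorRules, dg]) hx1
      simpa using this

/-- Builder for `y0`. -/
lemma d_y0 : ∀ (M : List (List Bool × List Bool)),
    DerivesN gr [n .y0] (tm (dcW M)) 0 := by
  intro M
  induction M with
  | nil => exact derE (by simp [rulesList, mirrorRules])
  | cons p M ih =>
    rcases p with ⟨p₁, p₂⟩
    rw [dcW_cons]
    have hy2 : DerivesN gr [n .y2] (tm (dm p₂ ++ Al.c :: dcW M)) 0 := by
      apply derLoop mem_y2_loop
      have := derTN (A := .y2) (B := .y0) (a := Al.c)
        (by simp [rulesList, mirrorRules]) ih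
      simpa using this
    have hy2' : DerivesN gr [n .y2] (tm (dm p₂ ++ Al.c :: dcW M)) 0 := hy2
    cases p₁ with
    | nil =>
      have := derTN (A := .y0) (B := .y2) (a := Al.d)
        (by simp [rulesList, mirrorRules]) hy2
      simpa using this
    | cons b v =>
      have hy1 : DerivesN gr [n .y1] (tm (dm v ++ Al.d :: (dm p₂ ++ Al.c :: dcW M))) 0 := by
        apply derLoop mem_y1_loop
        have := derTN (A := .y1) (B := .y2) (a := Al.d)
          (by simp [rulesList, mirrorRules]) hy2
        simpa using this
      have := derTN (A := .y0) (B := .y1) (a := dg b)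
        (by cases b <;> simp [rulesList, mirrorRules, dg]) hy1
      simpa using this

/-- Builder for `gb`. -/
lemma d_gb (v : List Bool) (P : List (List Bool × List Bool)) (hv : v ≠ [true, false]) :
    DerivesN gr [n .gb] (tm (dm v ++ Al.d :: cdW P)) 0 := by
  match v, hv with
  | [], _ =>
    have := derTN (A := .gb) (B := .z0) (a := Al.d) (by simp [rulesList, mirrorRules]) (d_z0 P)
    simpa using this
  | false :: v, _ =>
    have := derTN (A := .gb) (B := .x0) (a := dg false)
      (by simp [rulesList, mirrorRules, dg]) (d_x0 P v)
    simpa [dg] using this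
  | true :: [], _ =>
    have h1 : DerivesN gr [n .gd] (tm (Al.d :: cdW P)) 0 := by
      have := derTN (A := .gd) (B := .z0) (a := Al.d) (by simp [rulesList, mirrorRules]) (d_z0 P)
      simpa using this
    have := derTN (A := .gb) (B := .gd) (a := dg true)
      (by simp [rulesList, mirrorRules, dg]) h1
    simpa [dg] using this
  | true :: true :: v, _ =>
    have h1 : DerivesN gr [n .gd] (tm (dg true :: (dm v ++ Al.d :: cdW P))) 0 := by
      have := derTN (A := .gd) (B := .x0) (a := dg true)
        (by simp [rulesList, mirrorRules, dg]) (d_x0 P v)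
      simpa using this
    have := derTN (A := .gb) (B := .gd) (a := dg true)
      (by simp [rulesList, mirrorRules, dg]) h1
    simpa [dg] using this
  | true :: false :: (b :: v), _ =>
    have h0 : DerivesN gr [n .gf] (tm (dg b :: (dm v ++ Al.d :: cdW P))) 0 := by
      have := derTN (A := .gf) (B := .x0) (a := dg b)
        (by cases b <;> simp [rulesList, mirrorRules, dg]) (d_x0 P v)
      simpa using this
    have h1 : DerivesN gr [n .gd] (tm (dg false :: dg b :: (dm v ++ Al.d :: cdW P))) 0 := by
      have := derTN (A := .gd) (B := .gf) (a := dg false)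
        (by simp [rulesList, mirrorRules, dg]) h0
      simpa using this
    have := derTN (A := .gb) (B := .gd) (a := dg true)
      (by simp [rulesList, mirrorRules, dg]) h1
    simpa [dg] using this

end DnregAux
namespace DnregAux

/-! ### Small chain builders -/

lemma d_d8 (v : List Bool) : DerivesN gr [n .d8] (tm (dm v)) 0 := by
  have := derLoop mem_d8_loop v (w := []) (derE (by simp [rulesList, mirrorRules]))
  simpa using this

lemma d_d9 (b : Bool) (v : List Bool) : DerivesN gr [n .d9] (tm (dg b :: dm v)) 0 :=
  derTN (by cases b <;> simp [rulesList, mirrorRules, dg]) (d_d8 v)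

lemma d_e2 (v : List Bool) : DerivesN gr [n .e2] (tm (dm v ++ [dg false])) 0 := by
  apply derLoop mem_e2_loop
  exact derT1 (by simp [rulesList, mirrorRules, dg])

lemma d_e6 (v : List Bool) : DerivesN gr [n .e6] (tm (dm v ++ [dg true])) 0 := by
  apply derLoop mem_e6_loop
  exact derT1 (by simp [rulesList, mirrorRules, dg])

lemma d_d5nil (v : List Bool) : DerivesN gr [n .d5] (tm (dm v ++ [Al.c])) 0 := by
  apply derLoop mem_d5_loop
  exact derT1 (by simp [rulesList, mirrorRules])

lemma d_d5e6 (v γ : List Bool) :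
    DerivesN gr [n .d5] (tm (dm v ++ Al.c :: (dm γ ++ [dg true]))) 0 := by
  apply derLoop mem_d5_loop
  have := derTN (A := .d5) (B := .e6) (a := Al.c) (by simp [rulesList, mirrorRules]) (d_e6 γ)
  simpa using this

lemma d_d10nil (v : List Bool) : DerivesN gr [n .d10] (tm (dm v ++ [Al.c])) 0 := by
  apply derLoop mem_d10_loop
  exact derT1 (by simp [rulesList, mirrorRules])

lemma d_d10e2 (v γ : List Bool) :
    DerivesN gr [n .d10] (tm (dm v ++ Al.c :: (dm γ ++ [dg false]))) 0 := by
  apply derLoop mem_d10_loop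
  have := derTN (A := .d10) (B := .e2) (a := Al.c) (by simp [rulesList, mirrorRules]) (d_e2 γ)
  simpa using this

/-! ### The mirror builder -/

lemma d_nm {s : Al} (hs : s = Al.c ∨ s = Al.d) :
    ∀ (σ τ : List Bool), τ ≠ σ.reverse →
    ∃ k ≤ σ.length, DerivesN gr [n (.nm s)] (tm (dm σ ++ s :: dm τ)) k := by
  have m1 : ∀ b : Bool, R (.nm s) [t (dg b), n (.nm s), t (dg b)] ∈ rulesList := by
    rcases hs with rfl | rfl <;> (intro b; cases b <;> simp [rulesList, mirrorRules, dg])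
  have m3 : R (.nm s) [t (dg false), n (.e1 s)] ∈ rulesList := by
    rcases hs with rfl | rfl <;> simp [rulesList, mirrorRules, dg]
  have m4 : R (.nm s) [t (dg true), n (.e3 s)] ∈ rulesList := by
    rcases hs with rfl | rfl <;> simp [rulesList, mirrorRules, dg]
  have m5 : R (.nm s) [t s, n .d9] ∈ rulesList := by
    rcases hs with rfl | rfl <;> simp [rulesList, mirrorRules]
  have m6 : ∀ b : Bool, R (.nm s) [t (dg b), n (.e5 s)] ∈ rulesList := by
    rcases hs with rfl | rfl <;> (intro b; cases b <;> simp [rulesList, mirrorRules, dg])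
  have me5a : R (.e5 s) [t s] ∈ rulesList := by
    rcases hs with rfl | rfl <;> simp [rulesList, mirrorRules]
  have me5b : ∀ b : Bool, R (.e5 s) [t (dg b), n (.e5 s)] ∈ rulesList := by
    rcases hs with rfl | rfl <;> (intro b; cases b <;> simp [rulesList, mirrorRules, dg])
  have me1a : R (.e1 s) [t s, n .e6] ∈ rulesList := by
    rcases hs with rfl | rfl <;> simp [rulesList, mirrorRules]
  have me1b : ∀ b : Bool, R (.e1 s) [t (dg b), n (.e1 s)] ∈ rulesList := by
    rcases hs with rfl | rfl <;> (intro b; cases b <;> simp [rulesList, mirrorRules, dg])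
  have me3a : R (.e3 s) [t s, n .e2] ∈ rulesList := by
    rcases hs with rfl | rfl <;> simp [rulesList, mirrorRules]
  have me3b : ∀ b : Bool, R (.e3 s) [t (dg b), n (.e3 s)] ∈ rulesList := by
    rcases hs with rfl | rfl <;> (intro b; cases b <;> simp [rulesList, mirrorRules, dg])
  have d_e5 : ∀ v : List Bool, DerivesN gr [n (.e5 s)] (tm (dm v ++ [s])) 0 := by
    intro v
    exact derLoop me5b v (derT1 me5a)
  have d_e1 : ∀ v v' : List Bool,
      DerivesN gr [n (.e1 s)] (tm (dm v ++ s :: (dm v' ++ [dg true]))) 0 := by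
    intro v v'
    apply derLoop me1b
    have := derTN me1a (d_e6 v')
    simpa using this
  have d_e3 : ∀ v v' : List Bool,
      DerivesN gr [n (.e3 s)] (tm (dm v ++ s :: (dm v' ++ [dg false]))) 0 := by
    intro v v'
    apply derLoop me3b
    have := derTN me3a (d_e2 v')
    simpa using this
  intro σ
  induction σ with
  | nil =>
    intro τ hτ
    cases τ with
    | nil => simp at hτ
    | cons b τ' =>
      refine ⟨0, le_refl _, ?_⟩
      have := derTN m5 (d_d9 b τ')
      simpa using this
  | cons a σ' ih =>
    intro τ hτ
    rcases List.eq_nil_or_concat τ with rfl | ⟨γ, b, rfl⟩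
    · refine ⟨0, Nat.zero_le _, ?_⟩
      have := derTN (m6 a) (d_e5 σ')
      simpa using this
    · simp only [List.concat_eq_append] at hτ ⊢
      by_cases hab : b = a
      · subst hab
        have hγ : γ ≠ σ'.reverse := by
          intro hg
          apply hτ
          rw [hg, List.reverse_cons]
        obtain ⟨k, hk, h⟩ := ih γ hγ
        refine ⟨k + 1, by simpa using Nat.succ_le_succ hk, ?_⟩
        have := derTNT (m1 b) h
        have heq : (dg b :: ((dm σ' ++ s :: dm γ) ++ [dg b]))
            = dm (b :: σ') ++ s :: dm (γ ++ [b]) := by simp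
        rw [← heq]
        simpa using this
      · refine ⟨0, Nat.zero_le _, ?_⟩
        cases a <;> cases b <;> try (exact absurd rfl hab)
        · -- a = false, b = true : use e1
          have := derTN m3 (d_e1 σ' γ)
          have heq : (dg false :: (dm σ' ++ s :: (dm γ ++ [dg true])))
              = dm (false :: σ') ++ s :: dm (γ ++ [true]) := by simp
          rw [← heq]
          simpa using this
        · -- a = true, b = false : use e3
          have := derTN m4 (d_e3 σ' γ)
          have heq : (dg true :: (dm σ' ++ s :: (dm γ ++ [dg false])))
              = dm (true :: σ') ++ s :: dm (γ ++ [false]) := by simp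
          rw [← heq]
          simpa using this

/-! ### The successor-violation builder -/

lemma krel_tt_compose {σ γ : List Bool} (h : KRel σ γ) : KRel (true :: σ) (γ ++ [false]) := by
  rcases h with ⟨k, z, h1, h2⟩ | ⟨m, h1, h2⟩
  · refine Or.inl ⟨k + 1, z, ?_, ?_⟩
    · rw [h1, List.replicate_succ]; simp
    · rw [h2, List.replicate_succ' (n := k) (a := false)]; simp
  · refine Or.inr ⟨m + 1, ?_, ?_⟩
    · rw [h1, List.replicate_succ]
    · rw [h2, List.replicate_succ' (n := m) (a := false)]; simp

lemma d_nk : ∀ (α β : List Bool), ¬ KRel α β →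
    ∃ k ≤ 2 * α.length + 1, DerivesN gr [n .nk] (tm (dm α ++ Al.c :: dm β)) k := by
  intro α
  induction α with
  | nil =>
    intro β hK
    refine ⟨0, by omega, ?_⟩
    match β, hK with
    | [], _ => exact derT1 (by simp [rulesList, mirrorRules])
    | false :: v, _ =>
      have := derTTN (A := .nk) (C := .d8) (a := Al.c) (b := dg false)
        (by simp [rulesList, mirrorRules, dg]) (d_d8 v)
      simpa using this
    | true :: [], hK => exact absurd (Or.inr ⟨0, rfl, rfl⟩) hK
    | true :: b :: v, _ =>
      have := derTTN (A := .nk) (C := .d9) (a := Al.c) (b := dg true)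
        (by simp [rulesList, mirrorRules, dg]) (d_d9 b v)
      simpa using this
  | cons a σ ih =>
    intro β hK
    cases a
    · -- a = false
      rcases List.eq_nil_or_concat β with rfl | ⟨γ, b, rfl⟩
      · refine ⟨0, by omega, ?_⟩
        have := derTN (A := .nk) (B := .d10) (a := dg false)
          (by simp [rulesList, mirrorRules, dg]) (d_d10nil σ)
        simpa using this
      · simp only [List.concat_eq_append] at hK ⊢
        cases b
        · refine ⟨0, by omega, ?_⟩
          have := derTN (A := .nk) (B := .d10) (a := dg false)
            (by simp [rulesList, mirrorRules, dg]) (d_d10e2 σ γ)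
          have heq : (dg false :: (dm σ ++ Al.c :: (dm γ ++ [dg false])))
              = dm (false :: σ) ++ Al.c :: dm (γ ++ [false]) := by simp
          rw [← heq]
          simpa using this
        · have hγ : γ ≠ σ.reverse := by
            intro hg
            exact hK (Or.inl ⟨0, σ, rfl, by rw [hg]; simp⟩)
          obtain ⟨k, hk, h⟩ := d_nm (Or.inl rfl) σ γ hγ
          refine ⟨k + 1, by simp; omega, ?_⟩
          have := derTNT (A := .nk) (B := .nm Al.c) (a := dg false) (b := dg true)
            (by simp [rulesList, mirrorRules, dg]) h
          have heq : (dg false :: ((dm σ ++ Al.c :: dm γ) ++ [dg true]))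
              = dm (false :: σ) ++ Al.c :: dm (γ ++ [true]) := by simp
          rw [← heq]
          simpa using this
    · -- a = true
      rcases List.eq_nil_or_concat β with rfl | ⟨γ, b, rfl⟩
      · refine ⟨0, by omega, ?_⟩
        have := derTN (A := .nk) (B := .d5) (a := dg true)
          (by simp [rulesList, mirrorRules, dg]) (d_d5nil σ)
        simpa using this
      · simp only [List.concat_eq_append] at hK ⊢
        cases b
        · have hK' : ¬ KRel σ γ := fun h => hK (krel_tt_compose h)
          obtain ⟨k, hk, h⟩ := ih γ hK'
          refine ⟨k + 1, by simp; omega, ?_⟩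
          have := derTNT (A := .nk) (B := .nk) (a := dg true) (b := dg false)
            (by simp [rulesList, mirrorRules, dg]) h
          have heq : (dg true :: ((dm σ ++ Al.c :: dm γ) ++ [dg false]))
              = dm (true :: σ) ++ Al.c :: dm (γ ++ [false]) := by simp
          rw [← heq]
          simpa using this
        · refine ⟨0, by omega, ?_⟩
          have := derTN (A := .nk) (B := .d5) (a := dg true)
            (by simp [rulesList, mirrorRules, dg]) (d_d5e6 σ γ)
          have heq : (dg true :: (dm σ ++ Al.c :: (dm γ ++ [dg true])))
              = dm (true :: σ) ++ Al.c :: dm (γ ++ [true]) := by simp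
          rw [← heq]
          simpa using this

end DnregAux
namespace DnregAux

lemma regroup' (nn s : ℕ) (r : List Al) :
    dm (msb s) ++ Al.d :: (cdW (chain s nn) ++ r) =
      dcW (mchain s nn) ++ (dm (msb (s + nn)) ++ Al.d :: r) := by
  have h := congrArg (· ++ r) (regroup nn s)
  simpa [List.append_assoc] using h

/-- Every word of a bad shape has a derivation with few non-regular steps. -/
theorem cheap_badShape {w : List Al} (hw : w ∈ BadShape) :
    ∃ k ≤ 2 * Nat.size w.length + 2, DerivesN gr [n .S] (tm w) k := by
  obtain ⟨v, P, rfl, hbad⟩ := hw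
  by_cases hv : v = msb 2
  · subst hv
    have hP : P ≠ chain 2 P.length := by
      rcases hbad with h | h
      · exact absurd rfl h
      · exact h
    obtain ⟨j, hj, htake, hne⟩ := first_bad P 2 hP
    have hsplit : P = chain 2 j ++ P[j] :: P.drop (j + 1) := by
      conv_lhs => rw [← List.take_append_drop j P]
      rw [htake, List.drop_eq_getElem_cons hj]
    rcases hPj : P[j] with ⟨σ, β⟩
    rw [hPj] at hsplit hne
    have hlen : 2 + j ≤ ([dg true, Al.c] ++ dm (msb 2) ++ Al.d :: cdW P).length := by
      have h1 := cdW_length_ge P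
      have h2 : j + 1 ≤ P.length := hj
      simp only [List.length_append, List.length_cons, msb_two, dm_length, List.length_cons,
        List.length_nil]
      omega
    have hsz : Nat.size (2 + j) ≤
        Nat.size ([dg true, Al.c] ++ dm (msb 2) ++ Al.d :: cdW P).length :=
      Nat.size_le_size hlen
    have hweq : [dg true, Al.c] ++ dm (msb 2) ++ Al.d :: cdW P
        = ([dg true, Al.c] ++ dm (msb 2) ++ Al.d :: cdW (chain 2 j))
          ++ (dm σ ++ Al.c :: dm β) ++ (Al.d :: cdW (P.drop (j + 1))) := by
      conv_lhs => rw [hsplit]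
      rw [cdW_append, cdW_cons']
      simp
    by_cases hσ : σ = Nat.bits (2 + j)
    · -- successor violation
      have hβ : ¬ KRel σ β := by
        intro h
        apply hne
        rw [hσ] at h
        have hb : β = msb (2 + j + 1) := krel_unique h (succ_krel (by omega))
        rw [hσ, hb]
      obtain ⟨k, hk, hnk⟩ := d_nk σ β hβ
      have hpreK : DerivesN gr [n .preK]
          (tm ([dg true, Al.c] ++ dm (msb 2) ++ Al.d :: cdW (chain 2 j))) 0 := by
        have hcx : DerivesN gr [n .cx0]
            (tm (Al.c :: (dm (msb 2) ++ Al.d :: cdW (chain 2 j)))) 0 := by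
          have := derTN (A := .cx0) (B := .x0) (a := Al.c)
            (by simp [rulesList, mirrorRules]) (d_x0 (chain 2 j) (msb 2))
          simpa using this
        have := derTN (A := .preK) (B := .cx0) (a := dg true)
          (by simp [rulesList, mirrorRules, dg]) hcx
        simpa using this
      have hpoK : DerivesN gr [n .poK] (tm (Al.d :: cdW (P.drop (j + 1)))) 0 := by
        have := derTN (A := .poK) (B := .z0) (a := Al.d)
          (by simp [rulesList, mirrorRules]) (d_z0 (P.drop (j + 1)))
        simpa using this
      have hS := derNNN (A := .S) (by simp [rulesList, mirrorRules]) hpreK hnk hpoK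
      refine ⟨0 + k + 0 + 1, ?_, by rw [hweq]; exact hS⟩
      have hσl : σ.length = Nat.size (2 + j) := by rw [hσ, bits_len_size]
      omega
    · -- mirror violation
      have hσ' : σ ≠ (msb (2 + j)).reverse := by rwa [msb_reverse]
      obtain ⟨k, hk, hnm⟩ := d_nm (Or.inr rfl) (msb (2 + j)) σ hσ'
      have hweq2 : [dg true, Al.c] ++ dm (msb 2) ++ Al.d :: cdW P
          = ([dg true, Al.c] ++ dcW (mchain 2 j))
            ++ (dm (msb (2 + j)) ++ Al.d :: dm σ)
            ++ (Al.c :: (dm β ++ Al.d :: cdW (P.drop (j + 1)))) := by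
        conv_lhs => rw [hsplit]
        rw [cdW_append, cdW_cons']
        rw [show cdW (chain 2 j) ++ (dm σ ++ Al.c :: (dm β ++ Al.d :: cdW (P.drop (j + 1))))
          = cdW (chain 2 j) ++ (dm σ ++ Al.c :: (dm β ++ Al.d :: cdW (P.drop (j + 1)))) from rfl]
        have := regroup' j 2 (dm σ ++ Al.c :: (dm β ++ Al.d :: cdW (P.drop (j + 1))))
        simp only [List.append_assoc, List.cons_append, List.nil_append] at this ⊢
        rw [this]
      have hpreM : DerivesN gr [n .preM] (tm ([dg true, Al.c] ++ dcW (mchain 2 j))) 0 := by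
        have hpm : DerivesN gr [n .pm1] (tm (Al.c :: dcW (mchain 2 j))) 0 := by
          have := derTN (A := .pm1) (B := .y0) (a := Al.c)
            (by simp [rulesList, mirrorRules]) (d_y0 (mchain 2 j))
          simpa using this
        have := derTN (A := .preM) (B := .pm1) (a := dg true)
          (by simp [rulesList, mirrorRules, dg]) hpm
        simpa using this
      have hcx0 : DerivesN gr [n .cx0]
          (tm (Al.c :: (dm β ++ Al.d :: cdW (P.drop (j + 1))))) 0 := by
        have := derTN (A := .cx0) (B := .x0) (a := Al.c)
          (by simp [rulesList, mirrorRules]) (d_x0 (P.drop (j + 1)) β)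
        simpa using this
      have hS := derNNN (A := .S) (by simp [rulesList, mirrorRules]) hpreM hnm hcx0
      refine ⟨0 + k + 0 + 1, ?_, by rw [hweq2]; exact hS⟩
      have hσl : (msb (2 + j)).length = Nat.size (2 + j) := by
        rw [msb, List.length_reverse, bits_len_size]
      omega
  · -- first block is wrong
    refine ⟨0, by omega, ?_⟩
    have hgb := d_gb v P (by rw [← msb_two]; exact hv)
    have hga : DerivesN gr [n .ga] (tm (Al.c :: (dm v ++ Al.d :: cdW P))) 0 := by
      have := derTN (A := .ga) (B := .gb) (a := Al.c)
        (by simp [rulesList, mirrorRules]) hgb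
      simpa using this
    have := derTN (A := .S) (B := .ga) (a := dg true)
      (by simp [rulesList, mirrorRules, dg]) hga
    simpa using this

end DnregAux
namespace DnregAux

/-! ### Soundness wrap-up and the dnreg bounds -/

lemma derives_sound {w : List Al}
    (h : gr.Derives [Symbol.nonterminal gr.initial] (List.map Symbol.terminal w)) :
    w ∈ BadShape :=
  lang_sound spec_closed h

lemma dnregWord_le (w : List Al) : dnregWord gr w ≤ 2 * Nat.size w.length + 2 := by
  rw [dnregWord]
  rcases Set.eq_empty_or_nonempty
      {k | DerivesN gr [Symbol.nonterminal gr.initial] (w.map Symbol.terminal) k} with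
    he | ⟨k₀, hk₀⟩
  · rw [he, Nat.sInf_empty]
    omega
  · have hBad : w ∈ BadShape := derives_sound (derives_of_derivesN hk₀)
    obtain ⟨k, hk, hD⟩ := cheap_badShape hBad
    exact le_trans (Nat.sInf_le hD) hk

lemma dnregFun_le (m : ℕ) : dnregFun gr m ≤ 2 * Nat.size m + 2 := by
  rw [dnregFun]
  apply csSup_le
  · exact ⟨dnregWord gr (List.replicate m Al.c), ⟨List.replicate m Al.c, by simp, rfl⟩⟩
  · rintro k ⟨w, hw, rfl⟩
    calc dnregWord gr w ≤ 2 * Nat.size w.length + 2 := dnregWord_le w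
    _ = 2 * Nat.size m + 2 := by rw [hw]

lemma size_le_log (m : ℕ) : Nat.size m ≤ Nat.log 2 m + 1 := by
  rcases Nat.eq_zero_or_pos m with rfl | hm
  · simp
  · exact Nat.size_le.mpr (Nat.lt_pow_succ_log_self (by norm_num) m)

lemma two_mul_add_one_le (k : ℕ) : 2 * k + 1 ≤ 2 ^ (k + 1) := by
  induction k with
  | zero => norm_num
  | succ k ih =>
    have h2 : (1 : ℕ) ≤ 2 ^ (k + 1) := Nat.one_le_two_pow
    calc 2 * (k + 1) + 1 = (2 * k + 1) + 2 := by ring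
    _ ≤ 2 ^ (k + 1) + 2 ^ (k + 1) := by omega
    _ = 2 ^ (k + 2) := by ring

lemma sq_le_pow (k : ℕ) : k * k ≤ 2 ^ (k + 1) := by
  induction k with
  | zero => norm_num
  | succ k ih =>
    have h1 := two_mul_add_one_le k
    calc (k + 1) * (k + 1) = k * k + (2 * k + 1) := by ring
    _ ≤ 2 ^ (k + 1) + 2 ^ (k + 1) := by omega
    _ = 2 ^ (k + 2) := by ring

lemma log_le_sqrt (m : ℕ) : Nat.log 2 m ≤ Nat.sqrt m + 1 := by
  rcases Nat.eq_zero_or_pos m with rfl | hm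
  · simp
  · set k := Nat.log 2 m with hk
    rcases Nat.eq_zero_or_pos k with hk0 | hk1
    · omega
    · have hpow : 2 ^ k ≤ m := Nat.pow_log_le_self 2 (by omega)
      have hsq : (k - 1) * (k - 1) ≤ 2 ^ k := by
        have := sq_le_pow (k - 1)
        rwa [show k - 1 + 1 = k by omega] at this
      have : k - 1 ≤ Nat.sqrt m := Nat.le_sqrt.mpr (by omega)
      omega

lemma inO_log : InO (dnregFun gr) (fun m => Nat.log 2 m) := by
  refine ⟨4, fun m => ?_⟩
  have h1 := dnregFun_le m
  have h2 := size_le_log m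
  simp only []
  omega

lemma inO_sqrt : InO (dnregFun gr) Nat.sqrt := by
  refine ⟨6, fun m => ?_⟩
  have h1 := dnregFun_le m
  have h2 := size_le_log m
  have h3 := log_le_sqrt m
  omega

/-! ### Non-regularity -/

lemma Wt_not_mem (tt : ℕ) : Wt tt ∉ gr.language := by
  intro h
  rw [ContextFreeGrammar.mem_language_iff] at h
  exact Wt_not_bad tt (derives_sound h)

lemma cross_mem {t₁ t₂ : ℕ} (hne : t₁ ≠ t₂) :
    Wt t₂ ++ cdW [(Nat.bits (2 + t₁), msb (2 + t₁ + 1))] ∈ gr.language := by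
  have hbad : Wt t₂ ++ cdW [(Nat.bits (2 + t₁), msb (2 + t₁ + 1))] ∈ BadShape := by
    refine ⟨msb 2, chain 2 t₂ ++ [(Nat.bits (2 + t₁), msb (2 + t₁ + 1))], ?_, Or.inr ?_⟩
    · rw [Wt, cdW_append]
      simp
    · intro hchain
      rw [List.length_append, chain_length] at hchain
      simp only [List.length_cons, List.length_nil, chain_snoc t₂ 2, List.append_right_inj,
        List.cons.injEq, Prod.mk.injEq, and_true] at hchain
      have := bits_injective hchain.1
      omega
  obtain ⟨k, -, hD⟩ := cheap_badShape hbad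
  rw [ContextFreeGrammar.mem_language_iff]
  exact derives_of_derivesN hD

lemma not_regular : ¬ gr.language.IsRegular := by
  rintro ⟨σ, hfin, M, hM⟩
  obtain ⟨t₁, t₂, hne, heq⟩ := Finite.exists_ne_map_eq_of_infinite fun tt : ℕ => M.eval (Wt tt)
  set z := cdW [(Nat.bits (2 + t₁), msb (2 + t₁ + 1))] with hz
  have h1 : Wt t₁ ++ z ∉ gr.language := by
    rw [hz, ← Wt_snoc]
    exact Wt_not_mem (t₁ + 1)
  have h2 : Wt t₂ ++ z ∈ gr.language := cross_mem hne
  apply h1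
  rw [← hM] at h2 ⊢
  rw [DFA.mem_accepts] at h2 ⊢
  have e1 : M.eval (Wt t₁ ++ z) = M.eval (Wt t₂ ++ z) := by
    rw [DFA.eval, DFA.evalFrom_of_append, DFA.evalFrom_of_append]
    rw [show M.evalFrom M.start (Wt t₁) = M.evalFrom M.start (Wt t₂) from heq]
  rw [e1]
  exact h2

end DnregAux

/-- Both `DNREG(√n)` and `DNREG(log n)` contain non-regular languages. -/
theorem DNREG_sqrt_and_log_contain_nonregular :
    (∃ (T : Type) (_ : Fintype T) (g : ContextFreeGrammar T),
      ¬ g.language.IsRegular ∧ InO (dnregFun g) Nat.sqrt) ∧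
    (∃ (T : Type) (_ : Fintype T) (g : ContextFreeGrammar T),
      ¬ g.language.IsRegular ∧ InO (dnregFun g) (fun n => Nat.log 2 n)) := by
  constructor
  · exact ⟨DnregAux.Al, inferInstance, DnregAux.gr, DnregAux.not_regular, DnregAux.inO_sqrt⟩
  · exact ⟨DnregAux.Al, inferInstance, DnregAux.gr, DnregAux.not_regular, DnregAux.inO_log⟩
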